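/- arXiv:1410.7437 — 4 statements merged into one kernel-verified Lean document; each statement's English description precedes it below -/
import Mathlib

section
/- (Wilson's fundamental construction.) Suppose there exists a group divisible design (X,Π,𝓑) with groups X₁,…,X_u, and let ω : X → ℤ≥0 be a weight function such that for every block B ∈ 𝓑 there exists a GDD of type [ω(x) : x ∈ B] (one group of size ω(x) for each point x of B) with block sizes in K. Then there exists a GDD of type [∑_{x∈X₁} ω(x), …, ∑_{x∈X_u} ω(x)] with block sizes in K. -/
/-- `IsGDD V grp K Blocks` : a group divisible design on point set `V`, where the group of
a point `x` is `grp x`; every block is a subset of `V` with size in `K` meeting each group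
at most once, and every pair of points of `V` from distinct groups lies in exactly one block. -/
def IsGDD {X ι : Type*} (V : Finset X) (grp : X → ι) (K : Set ℕ)
    (Blocks : Finset (Finset X)) : Prop :=
  (∀ B ∈ Blocks, B ⊆ V ∧ B.card ∈ K ∧ ∀ x ∈ B, ∀ y ∈ B, grp x = grp y → x = y) ∧
    ∀ x ∈ V, ∀ y ∈ V, grp x ≠ grp y → ∃! B, B ∈ Blocks ∧ x ∈ B ∧ y ∈ B

/-- Auxiliary equivalence: the subtype of a sigma type cut out by a predicate on the base
is equivalent to the sigma over the subtype of the base. -/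
def sigmaSubtypeEquiv {X : Type} (ω : X → ℕ) (p : X → Prop) :
    (Σ x : Subtype p, Fin (ω x.val)) ≃ {q : Σ x : X, Fin (ω x) // p q.1} where
  toFun q := ⟨⟨q.1.val, q.2⟩, q.1.prop⟩
  invFun q := ⟨⟨q.val.1, q.prop⟩, q.val.2⟩
  left_inv := fun ⟨⟨_, _⟩, _⟩ => rfl
  right_inv := fun ⟨⟨_, _⟩, _⟩ => rfl

/-- Wilson's fundamental construction.  Let `(X, Π, 𝓑)` be a GDD (with unrestricted block
sizes) with groups the fibres of `grp : X → ι`, and let `ω : X → ℕ` be a weight function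
such that for every block `B` there is an ingredient GDD, with block sizes in `K`, having
one group of size `ω x` for each point `x ∈ B`.  Then there is a GDD with block sizes in
`K` having one group of size `∑_{x ∈ Xᵢ} ω x` for each group `Xᵢ` of the master GDD. -/
theorem statement4 {X ι : Type} [Fintype X] [DecidableEq X] [Fintype ι] [DecidableEq ι]
    (grp : X → ι) (MBlocks : Finset (Finset X))
    (hM : IsGDD Finset.univ grp (Set.univ : Set ℕ) MBlocks)
    (K : Set ℕ) (ω : X → ℕ)
    (hing : ∀ B ∈ MBlocks, ∃ (n : ℕ) (g' : Fin n → {x // x ∈ B})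
        (IBlocks : Finset (Finset (Fin n))),
        IsGDD Finset.univ g' K IBlocks ∧
          ∀ xb : {x // x ∈ B},
            (Finset.univ.filter fun y => g' y = xb).card = ω xb.val) :
    ∃ (n : ℕ) (g : Fin n → ι) (NBlocks : Finset (Finset (Fin n))),
      IsGDD Finset.univ g K NBlocks ∧
        ∀ i : ι, (Finset.univ.filter fun y => g y = i).card
          = ∑ x ∈ Finset.univ.filter fun x => grp x = i, ω x := by
  classical
  choose n' g' IB hGDD hcard using fun B : {B // B ∈ MBlocks} => hing B.1 B.2
  have hfib : ∀ (B : {B // B ∈ MBlocks}) (xb : {x // x ∈ B.val}),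
      Fintype.card {z : Fin (n' B) // g' B z = xb} = ω xb.val := by
    intro B xb
    rw [Fintype.card_subtype]
    exact hcard B xb
  let σ : ∀ (B : {B // B ∈ MBlocks}) (xb : {x // x ∈ B.val}),
      {z : Fin (n' B) // g' B z = xb} ≃ Fin (ω xb.val) :=
    fun B xb => Fintype.equivFinOfCardEq (hfib B xb)
  let E : ∀ B : {B // B ∈ MBlocks},
      Fin (n' B) ≃ {q : Σ x : X, Fin (ω x) // q.1 ∈ B.val} :=
    fun B => ((Equiv.sigmaFiberEquiv (g' B)).symm.trans
      (Equiv.sigmaCongrRight (σ B))).trans (sigmaSubtypeEquiv ω (· ∈ B.val))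
  let ψ : ∀ B : {B // B ∈ MBlocks}, Fin (n' B) → Σ x : X, Fin (ω x) :=
    fun B z => (E B z).val
  have hψ1 : ∀ B z, (ψ B z).1 = (g' B z).val := fun B z => rfl
  have hψinj : ∀ B, Function.Injective (ψ B) :=
    fun B => Subtype.val_injective.comp (E B).injective
  have hψsurj : ∀ B (q : Σ x : X, Fin (ω x)), q.1 ∈ B.val → ∃ z, ψ B z = q := by
    intro B q hq
    exact ⟨(E B).symm ⟨q, hq⟩, congrArg Subtype.val ((E B).apply_symm_apply ⟨q, hq⟩)⟩
  set N := Fintype.card (Σ x : X, Fin (ω x)) with hN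
  let e : (Σ x : X, Fin (ω x)) ≃ Fin N := Fintype.equivFin _
  let g : Fin N → ι := fun p => grp (e.symm p).1
  let φ : ∀ B : {B // B ∈ MBlocks}, Fin (n' B) → Fin N := fun B z => e (ψ B z)
  have hφinj : ∀ B, Function.Injective (φ B) := fun B => e.injective.comp (hψinj B)
  have hgφ : ∀ B z, g (φ B z) = grp (g' B z).val := by
    intro B z
    simp only [g, φ, Equiv.symm_apply_apply, hψ1]
  refine ⟨N, g, MBlocks.attach.biUnion (fun B => (IB B).image fun C => C.image (φ B)),
    ⟨?_, ?_⟩, ?_⟩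
  · intro D hD
    simp only [Finset.mem_biUnion, Finset.mem_image, Finset.mem_attach, true_and] at hD
    obtain ⟨B, C, hC, rfl⟩ := hD
    refine ⟨Finset.subset_univ _, ?_, ?_⟩
    · rw [Finset.card_image_of_injective _ (hφinj B)]
      exact ((hGDD B).1 C hC).2.1
    · intro x hx y hy hxy
      simp only [Finset.mem_image] at hx hy
      obtain ⟨z, hz, rfl⟩ := hx
      obtain ⟨w, hw, rfl⟩ := hy
      rw [hgφ, hgφ] at hxy
      have h1 : g' B z = g' B w :=
        Subtype.ext ((hM.1 B.val B.prop).2.2 (g' B z).val (g' B z).prop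
          (g' B w).val (g' B w).prop hxy)
      exact congrArg (φ B) (((hGDD B).1 C hC).2.2 z hz w hw h1)
  · intro p _ q _ hpq
    have hpq' : grp (e.symm p).1 ≠ grp (e.symm q).1 := hpq
    obtain ⟨B0, ⟨hB0M, hpB0, hqB0⟩, hB0u⟩ :=
      hM.2 (e.symm p).1 (Finset.mem_univ _) (e.symm q).1 (Finset.mem_univ _) hpq'
    set B : {B // B ∈ MBlocks} := ⟨B0, hB0M⟩ with hB
    obtain ⟨z, hz⟩ := hψsurj B (e.symm p) hpB0
    obtain ⟨w, hw⟩ := hψsurj B (e.symm q) hqB0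
    have h1 : (e.symm p).1 = (g' B z).val := by rw [← hz]; rfl
    have h2 : (e.symm q).1 = (g' B w).val := by rw [← hw]; rfl
    have hzw : g' B z ≠ g' B w := by
      intro h
      apply hpq'
      rw [h1, h2, h]
    obtain ⟨C, ⟨hC, hzC, hwC⟩, hCu⟩ :=
      (hGDD B).2 z (Finset.mem_univ _) w (Finset.mem_univ _) hzw
    refine ⟨C.image (φ B), ⟨?_, ?_, ?_⟩, ?_⟩
    · exact Finset.mem_biUnion.mpr ⟨B, Finset.mem_attach _ _, Finset.mem_image_of_mem _ hC⟩
    · refine Finset.mem_image.mpr ⟨z, hzC, ?_⟩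
      show e (ψ B z) = p
      rw [hz, Equiv.apply_symm_apply]
    · refine Finset.mem_image.mpr ⟨w, hwC, ?_⟩
      show e (ψ B w) = q
      rw [hw, Equiv.apply_symm_apply]
    · rintro D ⟨hDmem, hpD, hqD⟩
      simp only [Finset.mem_biUnion, Finset.mem_image, Finset.mem_attach, true_and] at hDmem
      obtain ⟨B', C', hC', rfl⟩ := hDmem
      simp only [Finset.mem_image] at hpD hqD
      obtain ⟨z', hz'C, hz'⟩ := hpD
      obtain ⟨w', hw'C, hw'⟩ := hqD
      have hz'' : ψ B' z' = e.symm p := by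
        rw [← hz']; exact (e.symm_apply_apply _).symm
      have hw'' : ψ B' w' = e.symm q := by
        rw [← hw']; exact (e.symm_apply_apply _).symm
      have hpB' : (e.symm p).1 ∈ B'.val := by
        rw [← hz'', hψ1]; exact (g' B' z').prop
      have hqB' : (e.symm q).1 ∈ B'.val := by
        rw [← hw'', hψ1]; exact (g' B' w').prop
      have hBB : B' = B := Subtype.ext (hB0u B'.val ⟨B'.prop, hpB', hqB'⟩)
      subst hBB
      have hzz : z' = z := hψinj B (by rw [hz'', hz])
      have hww : w' = w := hψinj B (by rw [hw'', hw])
      subst hzz; subst hww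
      exact congrArg (fun C => Finset.image (φ B) C) (hCu C' ⟨hC', hz'C, hw'C⟩)
  · intro i
    calc (Finset.univ.filter fun y => g y = i).card
        = Fintype.card {y : Fin N // g y = i} := (Fintype.card_subtype _).symm
      _ = Fintype.card {q : Σ x : X, Fin (ω x) // grp q.1 = i} :=
          Fintype.card_congr (e.symm.subtypeEquiv fun y => Iff.rfl)
      _ = Fintype.card (Σ x : {x : X // grp x = i}, Fin (ω x.val)) :=
          Fintype.card_congr (sigmaSubtypeEquiv ω fun x => grp x = i).symm
      _ = ∑ x : {x : X // grp x = i}, ω x.val := by simp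
      _ = ∑ x ∈ Finset.univ.filter fun x => grp x = i, ω x :=
          (Finset.sum_subtype _ (by simp) _).symm
end

section
/- For every integer d ≥ 1, PG_d(4) admits a legal truncation removing [d-1]₄ + 1 points such that some hyperplane has precisely one point removed (i.e., [d-1]₄ ∈ S(d,0)). -/
/-- The field with four elements. -/
abbrev F4 : Type := GaloisField 2 2

/-- The points of the projective space `PG_d(4)` : one-dimensional subspaces of `F4^(d+1)`. -/
abbrev PGPoint (d : ℕ) := Projectivization F4 (Fin (d + 1) → F4)

/-- The set of projective points lying in a given linear subspace `W` of `F4^(d+1)`. -/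
def pointsIn {d : ℕ} (W : Submodule F4 (Fin (d + 1) → F4)) : Set (PGPoint d) :=
  {p | p.submodule ≤ W}

/-- A line of `PG_d(4)` : the set of points contained in some 2-dimensional linear subspace. -/
def IsLine {d : ℕ} (L : Set (PGPoint d)) : Prop :=
  ∃ W : Submodule F4 (Fin (d + 1) → F4), Module.finrank F4 W = 2 ∧ L = pointsIn W

/-- `LegalTrunc D` : removing the point set `D` from `PG_d(4)` is a legal truncation,
i.e. no line has exactly two points outside `D`. -/
def LegalTrunc {d : ℕ} (D : Set (PGPoint d)) : Prop :=
  ∀ L : Set (PGPoint d), IsLine L → (L \ D).ncard ≠ 2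

/-- `bracket4 e = [e]₄ = 1 + 4 + 4² + ⋯ + 4^e`. -/
def bracket4 (e : ℕ) : ℕ := ∑ i ∈ Finset.range (e + 1), 4 ^ i

/-- `TT d i` (the set `T(d,i)` of the paper): the set of integers `n` such that `PG_d(4)`
admits a legal truncation removing `n` points, in which some hyperplane `H` has
removed-point set exactly the point set of a copy of `PG_i(4)` contained in `H`. -/
def TT (d i : ℕ) : Set ℕ :=
  {n | ∃ D : Set (PGPoint d), LegalTrunc D ∧ D.ncard = n ∧
    ∃ H W : Submodule F4 (Fin (d + 1) → F4),
      Module.finrank F4 H = d ∧ Module.finrank F4 W = i + 1 ∧ W ≤ H ∧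
        D ∩ pointsIn H = pointsIn W}

/-- `SS d i = S(d,i) = T(d,i) - [i]₄` (every element of `T(d,i)` is at least `[i]₄`). -/
def SS (d i : ℕ) : Set ℕ := {m | m + bracket4 i ∈ TT d i}

open Projectivization Module Set Finset

-- helper: ncard of disjoint finite union over Fin n
lemma ncard_iUnion_fin {α : Type*} : ∀ {n : ℕ} (s : Fin n → Set α),
    (∀ i, (s i).Finite) → (Pairwise (Function.onFun Disjoint s)) →
    (⋃ i, s i).ncard = ∑ i, (s i).ncard := by
  intro n
  induction n with
  | zero => intro s _ _; simp
  | succ n ih =>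
    intro s hfin hdisj
    have hsplit : (⋃ i, s i) = s 0 ∪ ⋃ i : Fin n, s i.succ := by
      ext x; simp [Set.mem_iUnion, Fin.exists_fin_succ]
    rw [hsplit, Set.ncard_union_eq ?_ (hfin 0) (Set.finite_iUnion fun i => hfin _),
      ih _ (fun i => hfin _) (fun i j hij => hdisj (by simpa using hij)),
      Fin.sum_univ_succ]
    exact Set.disjoint_iUnion_right.2 fun i => hdisj (Fin.succ_ne_zero i).symm


/-- `x` is nonzero with top nonzero coordinate `k`, and satisfies the removal pattern. -/
def Pc (d : ℕ) (k : Fin (d+1)) (x : Fin (d+1) → F4) : Prop :=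
  (∀ i, k < i → x i = 0) ∧ x k ≠ 0 ∧
    (k.val = 0 ∨ (k.val = 1 ∧ x 0 = 0) ∨ (2 ≤ k.val ∧ x 1 = x k))

def Pv (d : ℕ) (x : Fin (d+1) → F4) : Prop := ∃ k, Pc d k x

noncomputable def Dset (d : ℕ) : Set (PGPoint d) := {p | Pv d p.rep}

lemma Pc_smul {d : ℕ} {c : F4} (hc : c ≠ 0) (k : Fin (d+1)) (x : Fin (d+1) → F4) :
    Pc d k (c • x) ↔ Pc d k x := by
  simp only [Pc, Pi.smul_apply, smul_eq_mul, mul_eq_zero, mul_ne_zero_iff]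
  constructor
  · rintro ⟨h1, h2, h3⟩
    refine ⟨fun i hi => (h1 i hi).resolve_left hc, h2.2, ?_⟩
    rcases h3 with h | ⟨h, h0⟩ | ⟨h, h0⟩
    · exact Or.inl h
    · exact Or.inr (Or.inl ⟨h, (h0.resolve_left hc)⟩)
    · exact Or.inr (Or.inr ⟨h, mul_left_cancel₀ hc h0⟩)
  · rintro ⟨h1, h2, h3⟩
    refine ⟨fun i hi => Or.inr (h1 i hi), ⟨hc, h2⟩, ?_⟩
    rcases h3 with h | ⟨h, h0⟩ | ⟨h, h0⟩
    · exact Or.inl h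
    · exact Or.inr (Or.inl ⟨h, Or.inr h0⟩)
    · exact Or.inr (Or.inr ⟨h, by rw [h0]⟩)

lemma Pv_smul {d : ℕ} {c : F4} (hc : c ≠ 0) (x : Fin (d+1) → F4) :
    Pv d (c • x) ↔ Pv d x := by
  unfold Pv; exact exists_congr fun k => Pc_smul hc k x

lemma Pc_unique {d : ℕ} {k k' : Fin (d+1)} {x : Fin (d+1) → F4}
    (h : Pc d k x) (h' : Pc d k' x) : k = k' := by
  by_contra hne
  rcases lt_or_gt_of_ne hne with hlt | hlt
  · exact h'.2.1 (h.1 k' hlt)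
  · exact h.2.1 (h'.1 k hlt)

lemma Pc_nonzero {d : ℕ} {k : Fin (d+1)} {x : Fin (d+1) → F4} (h : Pc d k x) : x ≠ 0 :=
  fun h0 => h.2.1 (by simp [h0])

lemma Pv_nonzero {d : ℕ} {x : Fin (d+1) → F4} (h : Pv d x) : x ≠ 0 := by
  obtain ⟨k, hk⟩ := h; exact Pc_nonzero hk

lemma mem_Dset {d : ℕ} {x : Fin (d+1) → F4} (hx : x ≠ 0) :
    Projectivization.mk F4 x hx ∈ Dset d ↔ Pv d x := by
  obtain ⟨a, ha⟩ := exists_smul_eq_mk_rep F4 x hx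
  have : (Projectivization.mk F4 x hx).rep = (a : F4) • x := by
    rw [← ha]; rfl
  rw [Dset, Set.mem_setOf_eq, this, Pv_smul a.ne_zero]

section
variable {d : ℕ}

def Ck (d : ℕ) (k : Fin (d+1)) : Set (Fin (d+1) → F4) := {x | Pc d k x ∧ x k = 1}

lemma card_F4 : Nat.card F4 = 4 := by
  have := GaloisField.card 2 2 (by norm_num)
  simpa using this

lemma val_one_of (hd : 1 ≤ d) : ((1 : Fin (d+1)) : ℕ) = 1 := by
  rw [Fin.val_one']; exact Nat.mod_eq_of_lt (by omega)

lemma Ck_zero {k : Fin (d+1)} (hk : k.val = 0) :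
    Ck d k = {Pi.single (0 : Fin (d+1)) (1 : F4)} := by
  have hk0 : k = 0 := Fin.ext (by simp [hk])
  subst hk0
  ext x
  simp only [Ck, Pc, Set.mem_setOf_eq, Set.mem_singleton_iff]
  constructor
  · rintro ⟨⟨h1, _, _⟩, h4⟩
    funext i
    rcases eq_or_ne i 0 with rfl | hi
    · simpa using h4
    · rw [h1 i (Fin.pos_of_ne_zero hi), Pi.single_eq_of_ne hi]
  · rintro rfl
    exact ⟨⟨fun i hi => Pi.single_eq_of_ne (fun h => absurd h hi.ne') 1,
      by simp, Or.inl rfl⟩, by simp⟩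

lemma Ck_one {k : Fin (d+1)} (hk : k.val = 1) :
    Ck d k = {Pi.single k (1 : F4)} := by
  have hk0 : k ≠ 0 := by intro h; rw [h] at hk; simp at hk
  ext x
  simp only [Ck, Pc, Set.mem_setOf_eq, Set.mem_singleton_iff, hk]
  constructor
  · rintro ⟨⟨h1, _, h3⟩, h4⟩
    rcases h3 with h | ⟨_, h0⟩ | ⟨h, _⟩
    · omega
    · funext i
      rcases lt_trichotomy i k with hi | rfl | hi
      · have hi0 : i = 0 := by
          have := Fin.lt_def.mp hi
          exact Fin.ext (by simp only [Fin.val_zero]; omega)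
        subst hi0
        rw [h0, Pi.single_eq_of_ne hk0.symm 1]
      · rw [h4, Pi.single_eq_same]
      · rw [h1 i hi, Pi.single_eq_of_ne (fun h => absurd h hi.ne') 1]
    · omega
  · rintro rfl
    refine ⟨⟨fun i hi => Pi.single_eq_of_ne (fun h => absurd h hi.ne') 1,
      by simp, Or.inr (Or.inl ⟨trivial, Pi.single_eq_of_ne hk0.symm 1⟩)⟩, by simp⟩

end

section
variable {d : ℕ}

noncomputable def gfun (d : ℕ) (k : Fin (d+1)) (f : {i : Fin (d+1) // i.val < k.val ∧ i.val ≠ 1} → F4) :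
    Fin (d+1) → F4 :=
  fun i => if h : i.val < k.val ∧ i.val ≠ 1 then f ⟨i, h⟩ else if k.val < i.val then 0 else 1

lemma ncard_Ck_ge2 {k : Fin (d+1)} (hk : 2 ≤ k.val) :
    (Ck d k).ncard = 4 ^ (k.val - 1) := by
  have hd2 : 2 ≤ d := by have := k.isLt; omega
  have h1v : ((1 : Fin (d+1)) : ℕ) = 1 := val_one_of (by omega)
  set S := {i : Fin (d+1) // i.val < k.val ∧ i.val ≠ 1} with hS
  have hgtop : ∀ f (i : Fin (d+1)), k < i → gfun d k f i = 0 := by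
    intro f i hi
    have hiv : k.val < i.val := Fin.lt_def.mp hi
    rw [gfun, dif_neg (by omega), if_pos hiv]
  have hgk : ∀ f, gfun d k f k = 1 := by
    intro f
    rw [gfun, dif_neg (by omega), if_neg (by omega)]
  have hg1 : ∀ f, gfun d k f 1 = 1 := by
    intro f
    rw [gfun, dif_neg (by rw [h1v]; omega), if_neg (by rw [h1v]; omega)]
  have hmem : ∀ f, gfun d k f ∈ Ck d k := by
    intro f
    refine ⟨⟨hgtop f, ?_, Or.inr (Or.inr ⟨hk, ?_⟩)⟩, hgk f⟩
    · rw [hgk f]; exact one_ne_zero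
    · rw [hg1 f, hgk f]
  have e : ↥(Ck d k) ≃ (S → F4) := by
    refine
      { toFun := fun x i => x.1 i.1
        invFun := fun f => ⟨gfun d k f, hmem f⟩
        left_inv := ?_
        right_inv := ?_ }
    · rintro ⟨x, ⟨hx1, hx2, hx3⟩, hx4⟩
      apply Subtype.ext
      funext i
      show gfun d k (fun j : S => x j.1) i = x i
      by_cases h : i.val < k.val ∧ i.val ≠ 1
      · rw [gfun, dif_pos h]
      · by_cases h2 : k.val < i.val
        · rw [hgtop _ i (Fin.lt_def.mpr h2), hx1 i (Fin.lt_def.mpr h2)]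
        · have : i.val = k.val ∨ i.val = 1 := by omega
          rcases this with h3 | h3
          · rw [show i = k from Fin.ext h3, hgk, hx4]
          · have hi1 : i = (1 : Fin (d+1)) := Fin.ext (by rw [h1v]; exact h3)
            rcases hx3 with h4 | h4 | h4
            · omega
            · omega
            · rw [hi1, hg1, h4.2, hx4]
    · intro f
      funext i
      show gfun d k f i.1 = f i
      rw [gfun, dif_pos i.2]
  have hcard : Nat.card S = k.val - 1 := by
    have e2 : S ≃ ((Finset.range k.val).erase 1 : Finset ℕ) := by
      refine
        { toFun := fun i => ⟨i.1.val, by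
            simp only [Finset.mem_erase, Finset.mem_range]
            exact ⟨i.2.2, i.2.1⟩⟩
          invFun := fun m => ⟨⟨m.1, by
            have hm := Finset.mem_erase.mp m.2
            have := Finset.mem_range.mp hm.2
            have := k.isLt
            omega⟩, by
            have hm := Finset.mem_erase.mp m.2
            exact ⟨Finset.mem_range.mp hm.2, hm.1⟩⟩
          left_inv := fun i => rfl
          right_inv := fun m => rfl }
    rw [Nat.card_congr e2, Nat.card_eq_fintype_card, Fintype.card_coe,
      Finset.card_erase_of_mem (Finset.mem_range.mpr (by omega)), Finset.card_range]
  rw [← Nat.card_coe_set_eq, Nat.card_congr e, Nat.card_fun, card_F4, hcard]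

end

section
variable {d : ℕ}

lemma single_ne_zero' : (Pi.single (0 : Fin (d+1)) (1:F4) : Fin (d+1) → F4) ≠ 0 := by
  intro h
  have := congrFun h (0 : Fin (d+1))
  simp at this

open scoped Classical in
noncomputable def gmk (d : ℕ) (x : Fin (d+1) → F4) : PGPoint d :=
  if h : x = 0 then Projectivization.mk F4 (Pi.single 0 1) single_ne_zero'
  else Projectivization.mk F4 x h

lemma gmk_eq {x : Fin (d+1) → F4} (hx : x ≠ 0) :
    gmk d x = Projectivization.mk F4 x hx := by
  rw [gmk, dif_neg hx]

lemma bijOn_gmk : Set.BijOn (gmk d) (⋃ k, Ck d k) (Dset d) := by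
  refine ⟨?_, ?_, ?_⟩
  · rintro x hx
    simp only [Set.mem_iUnion] at hx
    obtain ⟨k, hk, hk1⟩ := hx
    have hx0 : x ≠ 0 := Pc_nonzero hk
    rw [gmk_eq hx0]
    exact (mem_Dset hx0).mpr ⟨k, hk⟩
  · rintro x hx y hy hxy
    simp only [Set.mem_iUnion] at hx hy
    obtain ⟨k, hk, hk1⟩ := hx
    obtain ⟨k', hk', hk'1⟩ := hy
    have hx0 : x ≠ 0 := Pc_nonzero hk
    have hy0 : y ≠ 0 := Pc_nonzero hk'
    rw [gmk_eq hx0, gmk_eq hy0, mk_eq_mk_iff] at hxy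
    obtain ⟨a, ha⟩ := hxy
    rw [Units.smul_def] at ha
    have hx' : Pc d k' x := by
      rw [← ha]; exact (Pc_smul a.ne_zero _ _).mpr hk'
    have hkk : k = k' := Pc_unique hk hx'
    subst hkk
    have hav : (a : F4) * y k = x k := by rw [← ha]; rfl
    rw [hk1, hk'1, mul_one] at hav
    rw [← ha, hav, one_smul]
  · rintro p hp
    obtain ⟨k, hk⟩ := hp
    have hrep : p.rep k ≠ 0 := hk.2.1
    set c : F4 := (p.rep k)⁻¹ with hc
    have hc0 : c ≠ 0 := inv_ne_zero hrep
    set x : Fin (d+1) → F4 := c • p.rep with hxdef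
    have hx0 : x ≠ 0 := fun h => hc0 (by
      have := congrFun h k
      simp only [hxdef, Pi.smul_apply, smul_eq_mul, Pi.zero_apply] at this
      exact (mul_eq_zero.mp this).resolve_right hrep)
    refine ⟨x, ?_, ?_⟩
    · simp only [Set.mem_iUnion]
      refine ⟨k, (Pc_smul hc0 _ _).mpr hk, ?_⟩
      simp only [hxdef, Pi.smul_apply, smul_eq_mul, hc]
      exact inv_mul_cancel₀ hrep
    · rw [gmk_eq hx0]
      have : Projectivization.mk F4 x hx0 = Projectivization.mk F4 p.rep p.rep_nonzero := by
        rw [mk_eq_mk_iff']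
        exact ⟨c, rfl⟩
      rw [this, mk_rep]

lemma pairwise_Ck : Pairwise (Function.onFun Disjoint (Ck d)) := by
  intro k k' hne
  rw [Function.onFun]
  rw [Set.disjoint_left]
  rintro x ⟨h1, _⟩ ⟨h2, _⟩
  exact hne (Pc_unique h1 h2)

lemma ncard_Dset (hd : 1 ≤ d) : (Dset d).ncard = bracket4 (d-1) + 1 := by
  have himg : gmk d '' (⋃ k, Ck d k) = Dset d := bijOn_gmk.image_eq
  rw [← himg, Set.ncard_image_of_injOn bijOn_gmk.injOn,
    ncard_iUnion_fin _ (fun k => Set.toFinite _) pairwise_Ck]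
  have hval : ∀ k : Fin (d+1),
      (Ck d k).ncard = (fun j => if j = 0 then 1 else 4 ^ (j - 1)) k.val := by
    intro k
    rcases Nat.lt_or_ge k.val 2 with h2 | h2
    · interval_cases h : k.val
      · rw [Ck_zero h, Set.ncard_singleton]; simp
      · rw [Ck_one h, Set.ncard_singleton]; simp
    · rw [ncard_Ck_ge2 h2]
      simp only [if_neg (by omega : ¬ k.val = 0)]
  calc ∑ k : Fin (d+1), (Ck d k).ncard
      = ∑ j ∈ Finset.range (d+1), (fun j => if j = 0 then 1 else 4 ^ (j - 1)) j := by
        rw [← Fin.sum_univ_eq_sum_range]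
        exact Finset.sum_congr rfl fun k _ => hval k
    _ = (∑ j ∈ Finset.range d, 4 ^ j) + 1 := by
        rw [Finset.sum_range_succ']
        simp
    _ = bracket4 (d-1) + 1 := by
        rw [bracket4, show d - 1 + 1 = d by omega]

end

instance pg_finite (d : ℕ) : Finite (PGPoint d) :=
  inferInstanceAs (Finite (Quotient (projectivizationSetoid F4 (Fin (d+1) → F4))))

section
variable {d : ℕ}

lemma legal_Dset (hd : 1 ≤ d) : LegalTrunc (Dset d) := by
  classical
  rintro L ⟨W, hW2, rfl⟩
  -- the top nonvanishing coordinate on W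
  have hWbot : W ≠ ⊥ := by
    intro h
    rw [h, finrank_bot] at hW2
    exact (by norm_num : (0:ℕ) ≠ 2) hW2
  set T : Finset (Fin (d+1)) := Finset.univ.filter (fun i => ∃ x ∈ W, x i ≠ 0) with hT
  have hTne : T.Nonempty := by
    by_contra h
    apply hWbot
    rw [Finset.not_nonempty_iff_eq_empty] at h
    rw [Submodule.eq_bot_iff]
    intro x hx
    funext i
    by_contra hxi
    have : i ∈ T := Finset.mem_filter.mpr ⟨Finset.mem_univ _, ⟨x, hx, hxi⟩⟩
    rw [h] at this
    exact absurd this (Finset.notMem_empty i)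
  set k : Fin (d+1) := T.max' hTne with hk
  obtain ⟨v0, hv0W, hv0k⟩ : ∃ x ∈ W, x k ≠ 0 :=
    (Finset.mem_filter.mp (T.max'_mem hTne)).2
  have hk_top : ∀ x ∈ W, ∀ i : Fin (d+1), k < i → x i = 0 := by
    intro x hxW i hi
    by_contra hxi
    have : i ∈ T := Finset.mem_filter.mpr ⟨Finset.mem_univ _, ⟨x, hxW, hxi⟩⟩
    exact absurd (T.le_max' i this) (not_le.mpr hi)
  -- normalized vector v with v k = 1
  set v : Fin (d+1) → F4 := (v0 k)⁻¹ • v0 with hv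
  have hvW : v ∈ W := W.smul_mem _ hv0W
  have hvk : v k = 1 := by
    simp only [hv, Pi.smul_apply, smul_eq_mul]
    exact inv_mul_cancel₀ hv0k
  have hv0' : v ≠ 0 := by
    intro h
    rw [h, Pi.zero_apply] at hvk
    exact one_ne_zero hvk.symm
  -- vector u ∈ W, independent of v, with u k = 0
  have hlt : Submodule.span F4 {v} < W := by
    refine lt_of_le_of_ne ((Submodule.span_le).mpr (by simpa using hvW)) ?_
    intro h
    rw [← h, finrank_span_singleton hv0'] at hW2
    norm_num at hW2
  obtain ⟨w, hwW, hwsp⟩ := SetLike.exists_of_lt hlt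
  set u : Fin (d+1) → F4 := w - (w k) • v with hu
  have huW : u ∈ W := W.sub_mem hwW (W.smul_mem _ hvW)
  have huk : u k = 0 := by
    simp only [hu, Pi.sub_apply, Pi.smul_apply, smul_eq_mul, hvk, mul_one, sub_self]
  have hu0 : u ≠ 0 := by
    intro h
    apply hwsp
    have : w = (w k) • v := by rwa [hu, sub_eq_zero] at h
    rw [this]
    exact Submodule.smul_mem _ _ (Submodule.mem_span_singleton_self v)
  -- every element of W with k-coordinate 0 lies on the line spanned by u
  have hker : ∀ y ∈ W, y k = 0 → ∃ c : F4, y = c • u := by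
    have hφ : ∀ y : W, ((LinearMap.proj k : (Fin (d+1) → F4) →ₗ[F4] F4).comp W.subtype) y
        = (y : Fin (d+1) → F4) k := fun y => rfl
    set φ := (LinearMap.proj k : (Fin (d+1) → F4) →ₗ[F4] F4).comp W.subtype with hφdef
    have hrange : LinearMap.range φ = ⊤ := by
      rw [Submodule.eq_top_iff']
      intro c
      exact ⟨c • ⟨v, hvW⟩, by simp [hφdef, hvk]⟩
    have hrank := LinearMap.finrank_range_add_finrank_ker φ
    rw [hrange, finrank_top, finrank_self, hW2] at hrank
    have hkerrank : finrank F4 (LinearMap.ker φ) = 1 := by omega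
    have huker : (⟨u, huW⟩ : W) ∈ LinearMap.ker φ := by
      rw [LinearMap.mem_ker, hφ]
      exact huk
    have hspan : Submodule.span F4 {(⟨u, huW⟩ : W)} = LinearMap.ker φ := by
      apply Submodule.eq_of_le_of_finrank_eq
      · rw [Submodule.span_le]
        simpa using huker
      · rw [hkerrank, finrank_span_singleton]
        intro h
        apply hu0
        exact congrArg Subtype.val h
    intro y hyW hyk
    have : (⟨y, hyW⟩ : W) ∈ LinearMap.ker φ := by rw [LinearMap.mem_ker, hφ]; exact hyk
    rw [← hspan, Submodule.mem_span_singleton] at this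
    obtain ⟨c, hc⟩ := this
    exact ⟨c, by
      have := congrArg Subtype.val hc
      simpa using this.symm⟩
  -- the five points of the line
  have hxt0 : ∀ t : F4, v + t • u ≠ 0 := by
    intro t h
    have := congrFun h k
    simp only [Pi.add_apply, Pi.smul_apply, smul_eq_mul, hvk, huk, mul_zero, add_zero,
      Pi.zero_apply] at this
    exact one_ne_zero this
  set q : F4 → PGPoint d := fun t => Projectivization.mk F4 (v + t • u) (hxt0 t) with hq
  set qinf : PGPoint d := Projectivization.mk F4 u hu0 with hqinf
  have hxtk : ∀ t : F4, (v + t • u) k = 1 := by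
    intro t
    simp [hvk, huk]
  have hL : pointsIn W = insert qinf (Set.range q) := by
    ext p
    simp only [pointsIn, Set.mem_setOf_eq, Set.mem_insert_iff, Set.mem_range]
    constructor
    · intro hp
      have hrep : p.rep ∈ W := by
        have : p.rep ∈ p.submodule := by
          rw [Projectivization.submodule_eq]
          exact Submodule.mem_span_singleton_self _
        exact hp this
      have hy : p.rep - (p.rep k) • v ∈ W := W.sub_mem hrep (W.smul_mem _ hvW)
      have hyk : (p.rep - (p.rep k) • v) k = 0 := by
        simp [hvk]
      obtain ⟨c, hc⟩ := hker _ hy hyk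
      have hdec : p.rep = (p.rep k) • v + c • u := by
        rw [← hc]; abel
      by_cases ha : p.rep k = 0
      · left
        rw [ha, zero_smul, zero_add] at hdec
        have hc0 : c ≠ 0 := by
          intro h; rw [h, zero_smul] at hdec; exact p.rep_nonzero hdec
        conv_lhs => rw [← mk_rep p]
        rw [hqinf, mk_eq_mk_iff']
        exact ⟨c, hdec.symm⟩
      · right
        refine ⟨(p.rep k)⁻¹ * c, ?_⟩
        conv_rhs => rw [← mk_rep p]
        rw [hq]
        simp only
        rw [mk_eq_mk_iff']
        refine ⟨(p.rep k)⁻¹, ?_⟩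
        calc (p.rep k)⁻¹ • p.rep = (p.rep k)⁻¹ • ((p.rep k) • v + c • u) := by rw [← hdec]
          _ = v + ((p.rep k)⁻¹ * c) • u := by
              rw [smul_add, smul_smul, smul_smul, inv_mul_cancel₀ ha, one_mul, smul_smul, hv]
    · intro hp
      rcases hp with rfl | ⟨t, rfl⟩
      · rw [hqinf, Projectivization.submodule_mk, Submodule.span_le]
        simpa using huW
      · rw [hq]
        simp only
        rw [Projectivization.submodule_mk, Submodule.span_le]
        have : v + t • u ∈ W := W.add_mem hvW (W.smul_mem _ huW)
        simpa using this
  have hxtW : ∀ t : F4, v + t • u ∈ W := fun t => W.add_mem hvW (W.smul_mem _ huW)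
  -- q is injective
  have hqinj : Function.Injective q := by
    intro s t hst
    rw [hq] at hst
    simp only at hst
    rw [mk_eq_mk_iff] at hst
    obtain ⟨a, ha⟩ := hst
    rw [Units.smul_def] at ha
    have hak := congrFun ha k
    simp only [Pi.smul_apply, smul_eq_mul, hxtk, mul_one] at hak
    rw [hak, one_smul] at ha
    have := add_left_cancel ha
    exact (smul_left_injective F4 hu0 this).symm
  -- membership of the affine points in Dset
  have hmemq : ∀ t : F4, (q t ∈ Dset d ↔
      (k.val = 0 ∨ (k.val = 1 ∧ (v + t • u) 0 = 0) ∨ (2 ≤ k.val ∧ (v + t • u) 1 = 1))) := by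
    intro t
    rw [hq]
    simp only
    rw [mem_Dset (hxt0 t)]
    constructor
    · rintro ⟨k', h1, h2, h3⟩
      have hkk : k' = k := by
        by_contra hne
        rcases lt_or_gt_of_ne hne with hlt | hlt
        · exact one_ne_zero (((h1 k hlt).symm.trans (hxtk t)).symm)
        · exact h2 (hk_top _ (hxtW t) k' hlt)
      subst hkk
      rcases h3 with h | h | h
      · exact Or.inl h
      · exact Or.inr (Or.inl h)
      · exact Or.inr (Or.inr ⟨h.1, by rw [← hxtk t]; exact h.2⟩)
    · intro h3
      refine ⟨k, fun i hi => hk_top _ (hxtW t) i hi,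
        by rw [hxtk]; exact one_ne_zero, ?_⟩
      rcases h3 with h | h | h
      · exact Or.inl h
      · exact Or.inr (Or.inl h)
      · exact Or.inr (Or.inr ⟨h.1, by rw [hxtk]; exact h.2⟩)
  -- k cannot be the zero index
  have hk1 : 1 ≤ k.val := by
    by_contra h
    have hk0 : k = 0 := Fin.ext (by simp only [Fin.val_zero]; omega)
    have hle : W ≤ Submodule.span F4
        {(Pi.single (0 : Fin (d+1)) (1 : F4) : Fin (d+1) → F4)} := by
      intro x hx
      have hxe : x = (x 0) • (Pi.single (0 : Fin (d+1)) (1 : F4) : Fin (d+1) → F4) := by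
        funext i
        rcases eq_or_ne i 0 with rfl | hi
        · simp
        · rw [hk_top x hx i (by rw [hk0]; exact Fin.pos_of_ne_zero hi)]
          simp [Pi.single_eq_of_ne hi]
      rw [hxe]
      exact Submodule.smul_mem _ _ (Submodule.mem_span_singleton_self _)
    have hmono := Submodule.finrank_mono hle
    rw [hW2, finrank_span_singleton single_ne_zero'] at hmono
    omega
  -- uniform affine description of membership
  obtain ⟨α, β, hαβ⟩ : ∃ α β : F4, ∀ t, (q t ∈ Dset d ↔ α * t + β = 0) := by
    rcases Nat.lt_or_ge k.val 2 with h2 | h2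
    · have hkv : k.val = 1 := by omega
      refine ⟨u 0, v 0, fun t => ?_⟩
      rw [hmemq t]
      constructor
      · rintro (h | h | h)
        · omega
        · rw [← h.2]
          simp only [Pi.add_apply, Pi.smul_apply, smul_eq_mul]
          ring
        · omega
      · intro h
        refine Or.inr (Or.inl ⟨hkv, ?_⟩)
        rw [← h]
        simp only [Pi.add_apply, Pi.smul_apply, smul_eq_mul]
        ring
    · refine ⟨u 1, v 1 - 1, fun t => ?_⟩
      rw [hmemq t]
      constructor
      · rintro (h | h | h)
        · omega
        · omega
        · have := h.2
          simp only [Pi.add_apply, Pi.smul_apply, smul_eq_mul] at this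
          rw [show u 1 * t + (v 1 - 1) = (v 1 + t * u 1) - 1 by ring, this, sub_self]
      · intro h
        refine Or.inr (Or.inr ⟨h2, ?_⟩)
        simp only [Pi.add_apply, Pi.smul_apply, smul_eq_mul]
        have : (v 1 + t * u 1) - 1 = 0 := by rw [← h]; ring
        linear_combination this
  rw [hL]
  rcases em (α = 0 ∧ β = 0) with hcase | hcase
  · -- every affine point is removed
    have hall : ∀ t, q t ∈ Dset d := fun t => (hαβ t).mpr (by rw [hcase.1, hcase.2]; ring)
    have hsub : insert qinf (Set.range q) \ Dset d ⊆ {qinf} := by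
      rintro p ⟨hp1, hp2⟩
      rcases hp1 with rfl | ⟨t, rfl⟩
      · exact Set.mem_singleton _
      · exact absurd (hall t) hp2
    have hle := Set.ncard_le_ncard hsub (Set.finite_singleton _)
    rw [Set.ncard_singleton] at hle
    omega
  · -- at most one affine point is removed
    have huniq : ∃ t0 : F4, ∀ t, α * t + β = 0 → t = t0 := by
      by_cases hαz : α = 0
      · refine ⟨0, fun t ht => ?_⟩
        rw [hαz, zero_mul, zero_add] at ht
        exact absurd ht (fun h => hcase ⟨hαz, h⟩)
      · refine ⟨α⁻¹ * (-β), fun t ht => ?_⟩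
        have : α * t = -β := by linear_combination ht
        rw [← this, ← mul_assoc, inv_mul_cancel₀ hαz, one_mul]
    obtain ⟨t0, ht0⟩ := huniq
    haveI : Fintype F4 := Fintype.ofFinite F4
    have hcard4 : Fintype.card F4 = 4 := by
      rw [← Nat.card_eq_fintype_card]; exact card_F4
    have h3 : ((Finset.univ.erase t0) : Finset F4).card = 3 := by
      rw [Finset.card_erase_of_mem (Finset.mem_univ _), Finset.card_univ, hcard4]
    obtain ⟨t1, t2, t3, h12, h13, h23, hset⟩ := Finset.card_eq_three.mp h3
    have hmem3 : ∀ t, t ≠ t0 → q t ∈ insert qinf (Set.range q) \ Dset d := by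
      intro t htne
      refine ⟨Set.mem_insert_of_mem _ ⟨t, rfl⟩, fun hD => htne (ht0 t ((hαβ t).mp hD))⟩
    have htne : ∀ t ∈ ({t1, t2, t3} : Finset F4), t ≠ t0 := by
      intro t ht
      have : t ∈ Finset.univ.erase t0 := by rw [hset]; exact ht
      exact Finset.ne_of_mem_erase this
    have hsub3 : ({q t1, q t2, q t3} : Set (PGPoint d)) ⊆
        insert qinf (Set.range q) \ Dset d := by
      intro p hp
      rcases hp with rfl | rfl | rfl
      · exact hmem3 t1 (htne t1 (by simp))
      · exact hmem3 t2 (htne t2 (by simp))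
      · exact hmem3 t3 (htne t3 (by simp))
    have h3n : ({q t1, q t2, q t3} : Set (PGPoint d)).ncard = 3 := by
      rw [Set.ncard_eq_three]
      exact ⟨q t1, q t2, q t3, fun h => h12 (hqinj h), fun h => h13 (hqinj h),
        fun h => h23 (hqinj h), rfl⟩
    have hle := Set.ncard_le_ncard hsub3 (Set.toFinite _)
    rw [h3n] at hle
    omega

end

section
variable {d : ℕ}

lemma mem_pointsIn {U : Submodule F4 (Fin (d+1) → F4)} {p : PGPoint d} :
    p ∈ pointsIn U ↔ p.rep ∈ U := by
  rw [pointsIn, Set.mem_setOf_eq, Projectivization.submodule_eq,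
    Submodule.span_singleton_le_iff_mem]

lemma one_ne_zero_fin (hd : 1 ≤ d) : (1 : Fin (d+1)) ≠ 0 := by
  intro h
  have := congrArg Fin.val h
  rw [val_one_of hd, Fin.val_zero] at this
  exact one_ne_zero this

lemma hyperplane_cond (hd : 1 ≤ d) :
    Dset d ∩ pointsIn (LinearMap.ker (LinearMap.proj (1 : Fin (d+1)) :
        (Fin (d+1) → F4) →ₗ[F4] F4))
      = pointsIn (Submodule.span F4
          {(Pi.single (0 : Fin (d+1)) (1 : F4) : Fin (d+1) → F4)}) := by
  ext p
  simp only [Set.mem_inter_iff, mem_pointsIn, LinearMap.mem_ker, LinearMap.proj_apply]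
  constructor
  · rintro ⟨⟨kk, h1, h2, h3⟩, hker⟩
    rcases h3 with h | h | h
    · have hkk : kk = 0 := Fin.ext (by simp only [Fin.val_zero]; omega)
      subst hkk
      have : p.rep = (p.rep 0) • (Pi.single (0 : Fin (d+1)) (1 : F4) : Fin (d+1) → F4) := by
        funext i
        rcases eq_or_ne i 0 with rfl | hi
        · simp
        · rw [h1 i (Fin.pos_of_ne_zero hi)]
          simp [Pi.single_eq_of_ne hi]
      rw [this]
      exact Submodule.smul_mem _ _ (Submodule.mem_span_singleton_self _)
    · exfalso
      apply h2
      have hkk : kk = (1 : Fin (d+1)) := Fin.ext (by rw [val_one_of hd]; exact h.1)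
      rw [hkk]
      exact hker
    · exfalso
      apply h2
      rw [← h.2]
      exact hker
  · intro h
    rw [Submodule.mem_span_singleton] at h
    obtain ⟨c, hc⟩ := h
    have hc0 : c ≠ 0 := by
      intro h0
      apply p.rep_nonzero
      rw [← hc, h0, zero_smul]
    constructor
    · refine ⟨0, fun i hi => ?_, ?_, Or.inl rfl⟩
      · rw [← hc]
        simp only [Pi.smul_apply, smul_eq_mul]
        rw [Pi.single_eq_of_ne (fun h => absurd h hi.ne') 1, mul_zero]
      · rw [← hc]
        simp only [Pi.smul_apply, smul_eq_mul, Pi.single_eq_same, mul_one]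
        exact hc0
    · rw [← hc]
      simp only [Pi.smul_apply, smul_eq_mul]
      rw [Pi.single_eq_of_ne (one_ne_zero_fin hd), mul_zero]

lemma finrank_ker_proj (hd : 1 ≤ d) :
    finrank F4 (LinearMap.ker (LinearMap.proj (1 : Fin (d+1)) :
      (Fin (d+1) → F4) →ₗ[F4] F4)) = d := by
  have hrank := LinearMap.finrank_range_add_finrank_ker
    (LinearMap.proj (1 : Fin (d+1)) : (Fin (d+1) → F4) →ₗ[F4] F4)
  have hrange : LinearMap.range (LinearMap.proj (1 : Fin (d+1)) :
      (Fin (d+1) → F4) →ₗ[F4] F4) = ⊤ := by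
    rw [Submodule.eq_top_iff']
    intro c
    exact ⟨Pi.single 1 c, by simp⟩
  rw [hrange, finrank_top, finrank_self, Module.finrank_fin_fun] at hrank
  omega

end

/-- For every `d ≥ 1` we have `[d-1]₄ ∈ S(d,0)`; i.e. `PG_d(4)` admits a legal truncation
removing `[d-1]₄ + 1` points in which some hyperplane has precisely one point removed. -/
theorem statement12 (d : ℕ) (hd : 1 ≤ d) : bracket4 (d - 1) ∈ SS d 0 := by
  have hb0 : bracket4 0 = 1 := by simp [bracket4]
  rw [SS, Set.mem_setOf_eq, hb0, TT, Set.mem_setOf_eq]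
  refine ⟨Dset d, legal_Dset hd, ncard_Dset hd,
    LinearMap.ker (LinearMap.proj (1 : Fin (d+1)) : (Fin (d+1) → F4) →ₗ[F4] F4),
    Submodule.span F4 {(Pi.single (0 : Fin (d+1)) (1 : F4) : Fin (d+1) → F4)},
    finrank_ker_proj hd, ?_, ?_, hyperplane_cond hd⟩
  · rw [finrank_span_singleton single_ne_zero']
  · rw [Submodule.span_le]
    intro x hx
    rw [Set.mem_singleton_iff] at hx
    subst hx
    rw [SetLike.mem_coe, LinearMap.mem_ker, LinearMap.proj_apply]
    exact Pi.single_eq_of_ne (one_ne_zero_fin hd) 1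
end

section
/- (Low values.) For every integer d ≥ 1, every integer n with 0 ≤ n ≤ [d-1]₄/2 belongs to S(d,0); equivalently, PG_d(4) admits, for each such n, a legal truncation removing n+1 points leaving a hyperplane with precisely one point removed. -/
namespace S14

/-- binary-weighted digit sum of the base-4 representation -/
def w : ℕ → ℕ
  | 0 => 0
  | (n+1) => (n+1) % 4 + 2 * w ((n+1) / 4)
decreasing_by exact Nat.div_lt_self (Nat.succ_pos n) (by norm_num)

lemma w_eq (n : ℕ) : w n = n % 4 + 2 * w (n / 4) := by
  cases n with
  | zero => simp [w]
  | succ k => rw [w]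

lemma w_zero : w 0 = 0 := by simp [w]

lemma w_eq_zero {n : ℕ} (h : w n = 0) : n = 0 := by
  induction n using Nat.strong_induction_on with
  | _ n ih =>
    rw [w_eq] at h
    rcases Nat.eq_zero_of_add_eq_zero_right h with h1
    have h2 : w (n / 4) = 0 := by omega
    by_cases hn : n = 0
    · exact hn
    · have := ih (n / 4) (Nat.div_lt_self (Nat.pos_of_ne_zero hn) (by norm_num)) h2
      omega

lemma w_small {n : ℕ} (h : n ≤ 3) : w n = n := by
  interval_cases n <;> simp [w]

lemma w_split : ∀ (e d r : ℕ), d ≤ 3 → r < 4 ^ e → w (d * 4 ^ e + r) = d * 2 ^ e + w r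
  | 0, d, r, hd, hr => by
    interval_cases r
    rw [w_zero]
    simpa using w_small hd
  | (e+1), d, r, hd, hr => by
    rw [w_eq (d * 4 ^ (e+1) + r)]
    have h1 : (d * 4 ^ (e+1) + r) % 4 = r % 4 := by
      have : d * 4 ^ (e+1) = (d * 4 ^ e) * 4 := by ring
      omega
    have h2 : (d * 4 ^ (e+1) + r) / 4 = d * 4 ^ e + r / 4 := by
      have : d * 4 ^ (e+1) = (d * 4 ^ e) * 4 := by ring
      omega
    have h3 : r / 4 < 4 ^ e := by
      have : 4 ^ (e+1) = 4 ^ e * 4 := by ring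
      omega
    rw [h1, h2, w_split e d (r / 4) hd h3, w_eq r]
    ring

/-- half-cost of n -/
def hc (n : ℕ) : ℕ := n % 4 + w (n / 4)

lemma hc_small {n : ℕ} (h : n ≤ 3) : hc n = n := by
  unfold hc; rw [Nat.div_eq_of_lt (by omega), Nat.mod_eq_of_lt (by omega), w_zero]; omega

lemma hc_zero : hc 0 = 0 := by simp [hc, w_zero]

lemma hc_eq_zero {n : ℕ} (h : hc n = 0) : n = 0 := by
  unfold hc at h
  have h2 : w (n / 4) = 0 := by omega
  have := w_eq_zero h2
  omega

lemma hc_split : ∀ (e d r : ℕ), 1 ≤ e → d ≤ 3 → r < 4 ^ e →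
    hc (d * 4 ^ e + r) = d * 2 ^ (e - 1) + hc r := by
  rintro e d r he hd hr
  obtain ⟨f, rfl⟩ : ∃ f, e = f + 1 := ⟨e - 1, by omega⟩
  unfold hc
  have h1 : (d * 4 ^ (f+1) + r) % 4 = r % 4 := by
    have : d * 4 ^ (f+1) = (d * 4 ^ f) * 4 := by ring
    omega
  have h2 : (d * 4 ^ (f+1) + r) / 4 = d * 4 ^ f + r / 4 := by
    have : d * 4 ^ (f+1) = (d * 4 ^ f) * 4 := by ring
    omega
  have h3 : r / 4 < 4 ^ f := by
    have : 4 ^ (f+1) = 4 ^ f * 4 := by ring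
    omega
  rw [h1, h2, w_split f d (r / 4) hd h3]
  simp only [Nat.add_sub_cancel]
  ring

lemma w_lb : ∀ (e n : ℕ), 4 ^ e ≤ n → 2 ^ e ≤ w n
  | 0, n, h => by
    rw [w_eq]
    have hn : n ≠ 0 := by simpa using Nat.one_le_iff_ne_zero.mp h
    by_cases h4 : n % 4 = 0
    · have : n / 4 ≠ 0 := by omega
      have := Nat.one_le_iff_ne_zero.mpr (fun hz => this (w_eq_zero hz))
      omega
    · omega
  | (e+1), n, h => by
    rw [w_eq]
    have h4 : 4 ^ e ≤ n / 4 := by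
      have : 4 ^ (e+1) = 4 ^ e * 4 := by ring
      omega
    have := w_lb e (n / 4) h4
    have : 2 ^ (e+1) = 2 * 2 ^ e := by ring
    omega

end S14

namespace S14

lemma w_eq_pow : ∀ (e n : ℕ), 4 ^ e ≤ n → w n ≤ 2 ^ e → n = 4 ^ e
  | 0, n, h, hw => by
    have h1 := w_lb 0 n h
    have h2 : w n = 1 := by omega
    rw [w_eq] at h2
    have h3 : w (n / 4) = 0 := by omega
    have h4 := w_eq_zero h3
    omega
  | (e+1), n, h, hw => by
    have h4 : 4 ^ e ≤ n / 4 := by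
      have : 4 ^ (e+1) = 4 ^ e * 4 := by ring
      omega
    have hlow := w_lb e (n / 4) h4
    rw [w_eq] at hw
    have hwq : w (n / 4) ≤ 2 ^ e := by omega
    have := w_eq_pow e (n / 4) h4 hwq
    have hm : n % 4 = 0 := by omega
    have : 4 ^ (e+1) = 4 ^ e * 4 := by ring
    omega

lemma hc_lb {e n : ℕ} (he : 1 ≤ e) (h : 4 ^ e ≤ n) : 2 ^ (e-1) ≤ hc n := by
  unfold hc
  have h4 : 4 ^ (e-1) ≤ n / 4 := by
    have : 4 ^ e = 4 ^ (e-1) * 4 := by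
      conv_lhs => rw [show e = (e-1)+1 by omega]
      ring
    omega
  have := w_lb (e-1) (n / 4) h4
  omega

lemma hc_eq_pow {e n : ℕ} (he : 1 ≤ e) (h : 4 ^ e ≤ n) (hw : hc n ≤ 2 ^ (e-1)) : n = 4 ^ e := by
  unfold hc at hw
  have h4 : 4 ^ (e-1) ≤ n / 4 := by
    have : 4 ^ e = 4 ^ (e-1) * 4 := by
      conv_lhs => rw [show e = (e-1)+1 by omega]
      ring
    omega
  have hlow := w_lb (e-1) (n / 4) h4
  have := w_eq_pow (e-1) (n / 4) h4 (by omega)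
  have hm : n % 4 = 0 := by omega
  have : 4 ^ e = 4 ^ (e-1) * 4 := by
    conv_lhs => rw [show e = (e-1)+1 by omega]
    ring
  omega

/-- greedy packing lemma -/
lemma greedy : ∀ (e : ℕ), 1 ≤ e → ∀ n B : ℕ, n < 4 ^ e → 2 ^ (e-1) ∣ B →
    ∃ a b : ℕ, n = a + b ∧ hc a + hc b = hc n ∧ hc a ≤ B ∧ (b = 0 ∨ hc a = B)
  | 1, _, n, B, hn, hB => by
    refine ⟨min n B, n - min n B, by omega, ?_, ?_, ?_⟩
    · rw [hc_small (by omega), hc_small (by omega), hc_small (by omega)]; omega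
    · rw [hc_small (by omega)]; omega
    · rw [hc_small (by omega)]; omega
  | (e+2), _, n, B, hn, hB => by
    have he1 : 1 ≤ e + 1 := by omega
    obtain ⟨d, r, hdr, hd3, hrlt⟩ : ∃ d r, n = d * 4 ^ (e+1) + r ∧ d ≤ 3 ∧ r < 4 ^ (e+1) := by
      have hdm := Nat.div_add_mod n (4 ^ (e+1))
      have hcomm : 4 ^ (e+1) * (n / 4 ^ (e+1)) = (n / 4 ^ (e+1)) * 4 ^ (e+1) := mul_comm _ _
      refine ⟨n / 4 ^ (e+1), n % 4 ^ (e+1), by omega, ?_, Nat.mod_lt _ (by positivity)⟩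
      by_contra hcon
      have h1 : 4 ≤ n / 4 ^ (e+1) := by omega
      have h2 : 4 * 4 ^ (e+1) ≤ (n / 4 ^ (e+1)) * 4 ^ (e+1) := Nat.mul_le_mul_right _ h1
      have h3 : (n / 4 ^ (e+1)) * 4 ^ (e+1) ≤ n := Nat.div_mul_le_self _ _
      have h4 : (4:ℕ) ^ (e+2) = 4 * 4 ^ (e+1) := by ring
      omega
    have hsplit : hc n = d * 2 ^ e + hc r := by
      rw [hdr, hc_split (e+1) d r he1 hd3 hrlt]; simp
    obtain ⟨K, hK⟩ := hB
    have hBe : B = 2 ^ e * (2 * K) := by rw [hK, show e+2-1 = e+1 by omega]; ring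
    by_cases hfit : d * 2 ^ e ≤ B
    · -- all top items fit
      have hdvd : (2:ℕ) ^ e ∣ (B - d * 2 ^ e) := Nat.dvd_sub ⟨2 * K, hBe⟩ ⟨d, by ring⟩
      obtain ⟨a', b', hab, hcc, hca, hdisj⟩ :=
        greedy (e+1) he1 r (B - d * 2 ^ e) hrlt (by simpa using hdvd)
      have hsa : hc (d * 4 ^ (e+1) + a') = d * 2 ^ e + hc a' := by
        rw [hc_split (e+1) d a' he1 hd3 (by omega)]; simp
      refine ⟨d * 4 ^ (e+1) + a', b', by omega, by omega, by omega, ?_⟩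
      rcases hdisj with h | h
      · exact Or.inl h
      · exact Or.inr (by omega)
    · -- top items overflow: fill bin exactly
      have hKd : 2 * K < d := by
        by_contra hcon
        have : d * 2 ^ e ≤ (2 * K) * 2 ^ e := Nat.mul_le_mul_right _ (by omega)
        have h2 : (2 * K) * 2 ^ e = 2 ^ e * (2 * K) := by ring
        omega
      have hs1 : hc ((2*K) * 4 ^ (e+1) + 0) = (2*K) * 2 ^ e + hc 0 := by
        rw [hc_split (e+1) (2*K) 0 he1 (by omega) (by positivity)]; simp
      have hs2 : hc ((d - 2*K) * 4 ^ (e+1) + r) = (d - 2*K) * 2 ^ e + hc r := by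
        rw [hc_split (e+1) (d - 2*K) r he1 (by omega) hrlt]; simp
      have hval : (2*K) * 2 ^ e = B := by rw [hBe]; ring
      have hadd : (2*K) * 2 ^ e + (d - 2*K) * 2 ^ e = d * 2 ^ e := by
        rw [← Nat.add_mul]; congr 1; omega
      have hn' : n = ((2*K) * 4 ^ (e+1) + 0) + ((d - 2*K) * 4 ^ (e+1) + r) := by
        have : (2*K) * 4 ^ (e+1) + (d - 2*K) * 4 ^ (e+1) = d * 4 ^ (e+1) := by
          rw [← Nat.add_mul]; congr 1; omega
        omega
      rw [hc_zero] at hs1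
      exact ⟨(2*K) * 4 ^ (e+1) + 0, (d - 2*K) * 4 ^ (e+1) + r, hn', by omega, by omega,
        Or.inr (by omega)⟩

end S14

namespace S14

inductive Reach : ℕ → ℕ → Prop
  | z : Reach 1 0
  | o : Reach 1 1
  | full (m : ℕ) (h : 1 ≤ m) : Reach m (4 ^ m)
  | add {m a b : ℕ} : Reach m a → Reach m b → Reach (m+1) (a+b)

lemma reach_of_hc : ∀ m : ℕ, 1 ≤ m → ∀ n : ℕ, hc n ≤ 2 ^ (m-1) → Reach m n := by
  intro m hm
  induction m, hm using Nat.le_induction with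
  | base =>
    intro n hn
    simp only [Nat.sub_self, pow_zero] at hn
    unfold hc at hn
    have hq : w (n / 4) ≤ 1 := by omega
    by_cases h0 : w (n / 4) = 0
    · have := w_eq_zero h0
      have hn4 : n ≤ 3 := by omega
      have : n % 4 = n := Nat.mod_eq_of_lt (by omega)
      have : n = 0 ∨ n = 1 := by omega
      rcases this with rfl | rfl
      · exact Reach.z
      · exact Reach.o
    · have h1 : w (n / 4) = 1 := by omega
      have hm : n % 4 = 0 := by omega
      rw [w_eq] at h1
      have h2 : w (n / 4 / 4) = 0 := by omega
      have := w_eq_zero h2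
      have : n / 4 = 1 := by omega
      have : n = 4 := by omega
      subst this
      exact Reach.full 1 le_rfl
  | succ m hm ih =>
    intro n hn
    simp only [Nat.add_sub_cancel] at hn
    by_cases hbig : 4 ^ (m+1) ≤ n
    · have : n = 4 ^ (m+1) := hc_eq_pow (by omega) hbig (by simpa using hn)
      subst this
      exact Reach.full (m+1) (by omega)
    · push_neg at hbig
      obtain ⟨d, r, hdr, hd3, hrlt⟩ : ∃ d r, n = d * 4 ^ m + r ∧ d ≤ 3 ∧ r < 4 ^ m := by
        have hdm := Nat.div_add_mod n (4 ^ m)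
        have hcomm : 4 ^ m * (n / 4 ^ m) = (n / 4 ^ m) * 4 ^ m := mul_comm _ _
        refine ⟨n / 4 ^ m, n % 4 ^ m, by omega, ?_, Nat.mod_lt _ (by positivity)⟩
        by_contra hcon
        have h1 : 4 ≤ n / 4 ^ m := by omega
        have h2 : 4 * 4 ^ m ≤ (n / 4 ^ m) * 4 ^ m := Nat.mul_le_mul_right _ h1
        have h4 : (4:ℕ) ^ (m+1) = 4 * 4 ^ m := by ring
        omega
      have hsplit : hc n = d * 2 ^ (m-1) + hc r := by
        rw [hdr, hc_split m d r hm hd3 hrlt]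
      have h2m : (2:ℕ) ^ m = 2 ^ (m-1) * 2 := by
        conv_lhs => rw [show m = (m-1)+1 by omega]
        ring
      have hpos : 1 ≤ 2 ^ (m-1) := Nat.one_le_pow _ _ (by norm_num)
      interval_cases d
      · -- d = 0 : use greedy split
        simp only [zero_mul, zero_add] at hdr hsplit
        obtain ⟨a, b, hab, hcc, hca, hdisj⟩ := greedy m hm n (2 ^ (m-1)) (by omega) dvd_rfl
        have ra : Reach m a := ih a hca
        have rb : Reach m b := by
          rcases hdisj with h | h
          · subst h; exact ih 0 (by rw [hc_zero]; positivity)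
          · exact ih b (by omega)
        rw [hab]
        exact Reach.add ra rb
      · -- d = 1
        have hr : hc r ≤ 2 ^ (m-1) := by omega
        have : n = 4 ^ m + r := by omega
        rw [this]
        exact Reach.add (Reach.full m hm) (ih r hr)
      · -- d = 2
        have hr : hc r = 0 := by omega
        have := hc_eq_zero hr
        subst this
        have : n = 4 ^ m + 4 ^ m := by omega
        rw [this]
        exact Reach.add (Reach.full m hm) (Reach.full m hm)
      · -- d = 3 : impossible
        exfalso
        omega

lemma maxhc : ∀ k : ℕ, 1 ≤ k → ∀ n : ℕ, n < 4 ^ k → hc n ≤ 3 * 2 ^ (k-1)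
  | 1, _, n, hn => by rw [hc_small (by omega)]; simpa using by omega
  | (k+2), _, n, hn => by
    obtain ⟨d, r, hdr, hd3, hrlt⟩ : ∃ d r, n = d * 4 ^ (k+1) + r ∧ d ≤ 3 ∧ r < 4 ^ (k+1) := by
      have hdm := Nat.div_add_mod n (4 ^ (k+1))
      have hcomm : 4 ^ (k+1) * (n / 4 ^ (k+1)) = (n / 4 ^ (k+1)) * 4 ^ (k+1) := mul_comm _ _
      refine ⟨n / 4 ^ (k+1), n % 4 ^ (k+1), by omega, ?_, Nat.mod_lt _ (by positivity)⟩
      by_contra hcon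
      have h1 : 4 ≤ n / 4 ^ (k+1) := by omega
      have h2 : 4 * 4 ^ (k+1) ≤ (n / 4 ^ (k+1)) * 4 ^ (k+1) := Nat.mul_le_mul_right _ h1
      have h4 : (4:ℕ) ^ (k+2) = 4 * 4 ^ (k+1) := by ring
      omega
    have hsplit : hc n = d * 2 ^ k + hc r := by
      rw [hdr, hc_split (k+1) d r (by omega) hd3 hrlt]; simp
    have hrec := maxhc (k+1) (by omega) r hrlt
    simp only [Nat.add_sub_cancel] at hrec
    have h2k : (2:ℕ) ^ (k+2-1) = 2 ^ k * 2 := by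
      rw [show k+2-1 = k+1 by omega]; ring
    have hd' : d * 2 ^ k ≤ 3 * 2 ^ k := Nat.mul_le_mul_right _ hd3
    omega

lemma cover : ∀ m : ℕ, 1 ≤ m → ∀ n : ℕ, 6 * n + 4 ≤ 4 ^ m → hc n ≤ 2 ^ (m-1) := by
  intro m hm
  induction m, hm using Nat.le_induction with
  | base =>
    intro n hn
    norm_num at hn
    have : n = 0 := by omega
    subst this
    rw [hc_zero]; positivity
  | succ m hm ih =>
    intro n hn
    have h4m : (4:ℕ) ^ (m+1) = 4 * 4 ^ m := by ring
    have hlt : n < 4 ^ m := by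
      have : (4:ℕ) ^ m ≥ 1 := Nat.one_le_pow _ _ (by norm_num)
      omega
    rcases Nat.lt_or_ge m 2 with hm1 | hm2
    · -- m = 1 : n ≤ 2
      have : m = 1 := by omega
      subst this
      have hn2 : n ≤ 2 := by omega
      rw [hc_small (by omega)]
      simpa using by omega
    · obtain ⟨d, r, hdr, hd3, hrlt⟩ : ∃ d r, n = d * 4 ^ (m-1) + r ∧ d ≤ 3 ∧ r < 4 ^ (m-1) := by
        have hdm := Nat.div_add_mod n (4 ^ (m-1))
        have hcomm : 4 ^ (m-1) * (n / 4 ^ (m-1)) = (n / 4 ^ (m-1)) * 4 ^ (m-1) := mul_comm _ _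
        refine ⟨n / 4 ^ (m-1), n % 4 ^ (m-1), by omega, ?_, Nat.mod_lt _ (by positivity)⟩
        by_contra hcon
        have h1 : 4 ≤ n / 4 ^ (m-1) := by omega
        have h2 : 4 * 4 ^ (m-1) ≤ (n / 4 ^ (m-1)) * 4 ^ (m-1) := Nat.mul_le_mul_right _ h1
        have h4 : (4:ℕ) ^ m = 4 * 4 ^ (m-1) := by
          conv_lhs => rw [show m = (m-1)+1 by omega]
          ring
        omega
      have hsplit : hc n = d * 2 ^ (m-2) + hc r := by
        rw [hdr, hc_split (m-1) d r (by omega) hd3 hrlt, show m-1-1 = m-2 by omega]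
      have h4m1 : (4:ℕ) ^ m = 4 * 4 ^ (m-1) := by
        conv_lhs => rw [show m = (m-1)+1 by omega]
        ring
      have h2m : (2:ℕ) ^ m = 2 ^ (m-2) * 4 := by
        conv_lhs => rw [show m = (m-2)+2 by omega]
        ring
      simp only [Nat.add_sub_cancel]
      interval_cases d
      · -- d ≤ 1 cases: bound by maxhc
        have hmx : hc r ≤ 3 * 2 ^ (m-2) := by
          have := maxhc (m-1) (by omega) r hrlt
          rwa [show m-1-1 = m-2 by omega] at this
        omega
      · have hmx : hc r ≤ 3 * 2 ^ (m-2) := by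
          have := maxhc (m-1) (by omega) r hrlt
          rwa [show m-1-1 = m-2 by omega] at this
        omega
      · -- d = 2
        have hr6 : 6 * r + 4 ≤ 4 ^ m := by
          have : 6 * (2 * 4 ^ (m-1)) = 12 * 4 ^ (m-1) := by ring
          omega
        have := ih r hr6
        have h2m1 : (2:ℕ) ^ (m-1) = 2 ^ (m-2) * 2 := by
          conv_lhs => rw [show m-1 = (m-2)+1 by omega]
          ring
        omega
      · -- d = 3 impossible
        exfalso
        have : 6 * (3 * 4 ^ (m-1)) = 18 * 4 ^ (m-1) := by ring
        omega

end S14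




namespace S14

abbrev AffPt (m : ℕ) := Fin m → F4

def lineSet {m : ℕ} (A : Set (AffPt m)) (a v : AffPt m) : Set F4 := {t | a + t • v ∈ A}

/-- invariant: no affine line meets `A` in exactly 3 points, and no line in the special
direction (coordinate `0`) meets `A` in exactly 2 points. -/
def Inv {m : ℕ} (A : Set (AffPt m)) : Prop :=
  ∀ a v : AffPt m, v ≠ 0 →
    (lineSet A a v).ncard ≠ 3 ∧ ((∀ i : Fin m, (i : ℕ) ≠ 0 → v i = 0) → (lineSet A a v).ncard ≠ 2)

lemma inv_empty {m : ℕ} : Inv (∅ : Set (AffPt m)) := by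
  intro a v hv
  have : lineSet (∅ : Set (AffPt m)) a v = ∅ := rfl
  rw [this]
  simp

lemma lineSet_subsingleton_ncard {m : ℕ} {A : Set (AffPt m)} {a v : AffPt m} (hv : v ≠ 0)
    (hA : A.Subsingleton) : (lineSet A a v).ncard ≤ 1 := by
  have hs : (lineSet A a v).Subsingleton := by
    intro t ht t' ht'
    have h1 : a + t • v = a + t' • v := hA ht ht'
    have h3 : t • v = t' • v := add_left_cancel h1
    have h2 : (t - t') • v = 0 := by rw [sub_smul, h3, sub_self]
    rcases smul_eq_zero.mp h2 with h | h
    · have := sub_eq_zero.mp h; exact this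
    · exact absurd h hv
  rcases Set.eq_empty_or_nonempty (lineSet A a v) with h | ⟨t, ht⟩
  · rw [h]; simp
  · have : lineSet A a v ⊆ {t} := fun t' ht' => hs ht' ht
    calc (lineSet A a v).ncard ≤ ({t} : Set F4).ncard := Set.ncard_le_ncard this (Set.finite_singleton t)
      _ = 1 := Set.ncard_singleton t

lemma inv_singleton {m : ℕ} (p : AffPt m) : Inv ({p} : Set (AffPt m)) := by
  intro a v hv
  have h := lineSet_subsingleton_ncard (A := {p}) (a := a) hv (by
    intro x hx y hy
    simp only [Set.mem_singleton_iff] at hx hy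
    rw [hx, hy])
  constructor
  · omega
  · intro _; omega

lemma ncard_univ_F4 : (Set.univ : Set F4).ncard = 4 := by
  rw [Set.ncard_univ]
  have := GaloisField.card 2 2 (by norm_num)
  norm_num at this
  exact this

lemma inv_univ {m : ℕ} : Inv (Set.univ : Set (AffPt m)) := by
  intro a v hv
  have : lineSet (Set.univ : Set (AffPt m)) a v = Set.univ := by
    ext t; simp [lineSet]
  rw [this, ncard_univ_F4]
  exact ⟨by omega, fun _ => by omega⟩

lemma ncard_univ_AffPt (m : ℕ) : (Set.univ : Set (AffPt m)).ncard = 4 ^ m := by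
  rw [Set.ncard_univ]
  have h4 : Nat.card F4 = 4 := by
    have := GaloisField.card 2 2 (by norm_num); norm_num at this; exact this
  simp [Nat.card_pi, h4]

end S14

namespace S14

def emb {m : ℕ} (c : F4) : AffPt m → AffPt (m+1) := fun x => Fin.snoc x c

lemma emb_injective {m : ℕ} (c : F4) : Function.Injective (emb (m := m) c) := by
  intro x y h
  funext i
  have := congrFun h i.castSucc
  simpa [emb, Fin.snoc_castSucc] using this

def stack {m : ℕ} (A₀ A₁ : Set (AffPt m)) : Set (AffPt (m+1)) :=
  emb 0 '' A₀ ∪ emb 1 '' A₁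

lemma mem_stack {m : ℕ} {A₀ A₁ : Set (AffPt m)} {x : AffPt m} {c : F4} :
    Fin.snoc x c ∈ stack A₀ A₁ ↔ (c = 0 ∧ x ∈ A₀) ∨ (c = 1 ∧ x ∈ A₁) := by
  constructor
  · rintro (⟨y, hy, hxy⟩ | ⟨y, hy, hxy⟩)
    · left
      have hc : c = 0 := by
        have := congrFun hxy (Fin.last m)
        simpa [emb, Fin.snoc_last] using this.symm
      have hx : y = x := by
        funext j
        have := congrFun hxy j.castSucc
        simpa [emb, Fin.snoc_castSucc] using this
      exact ⟨hc, hx ▸ hy⟩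
    · right
      have hc : c = 1 := by
        have := congrFun hxy (Fin.last m)
        simpa [emb, Fin.snoc_last] using this.symm
      have hx : y = x := by
        funext j
        have := congrFun hxy j.castSucc
        simpa [emb, Fin.snoc_castSucc] using this
      exact ⟨hc, hx ▸ hy⟩
  · rintro (⟨rfl, hx⟩ | ⟨rfl, hx⟩)
    · exact Or.inl ⟨x, hx, rfl⟩
    · exact Or.inr ⟨x, hx, rfl⟩

lemma stack_ncard {m : ℕ} (A₀ A₁ : Set (AffPt m)) :
    (stack A₀ A₁).ncard = A₀.ncard + A₁.ncard := by
  have hdisj : Disjoint (emb (m := m) 0 '' A₀) (emb 1 '' A₁) := by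
    rw [Set.disjoint_left]
    rintro z ⟨y, _, rfl⟩ ⟨y', _, h⟩
    have := congrFun h (Fin.last m)
    simp only [emb, Fin.snoc_last] at this
    exact one_ne_zero this
  rw [stack, Set.ncard_union_eq hdisj (Set.toFinite _) (Set.toFinite _),
    Set.ncard_image_of_injective _ (emb_injective 0),
    Set.ncard_image_of_injective _ (emb_injective 1)]

lemma stack_inv {m : ℕ} (hm : 1 ≤ m) {A₀ A₁ : Set (AffPt m)} (h₀ : Inv A₀) (h₁ : Inv A₁) :
    Inv (stack A₀ A₁) := by
  intro a v hv
  set al := a (Fin.last m) with hal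
  set vl := v (Fin.last m) with hvl'
  by_cases hvl : vl = 0
  · -- line parallel to the levels
    have hkey : ∀ t : F4, a + t • v = Fin.snoc (Fin.init a + t • Fin.init v) al := by
      intro t
      funext i
      refine Fin.lastCases ?_ (fun j => ?_) i
      · simp only [Pi.add_apply, Pi.smul_apply, smul_eq_mul, Fin.snoc_last, ← hvl', ← hal, hvl]
        ring
      · simp [Fin.snoc_castSucc, Fin.init]
    have hinit : Fin.init v ≠ 0 := by
      intro h0
      apply hv
      funext i
      refine Fin.lastCases ?_ (fun j => ?_) i
      · simpa [← hvl'] using hvl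
      · have := congrFun h0 j
        simpa [Fin.init] using this
    have hspec : (∀ i : Fin (m+1), (i : ℕ) ≠ 0 → v i = 0) →
        (∀ j : Fin m, (j : ℕ) ≠ 0 → Fin.init v j = 0) := by
      intro hsp j hj
      have := hsp j.castSucc (by simpa using hj)
      simpa [Fin.init] using this
    by_cases ha0 : al = 0
    · have heq : lineSet (stack A₀ A₁) a v = lineSet A₀ (Fin.init a) (Fin.init v) := by
        ext t
        simp only [lineSet, Set.mem_setOf_eq, hkey t, ha0]
        rw [mem_stack]
        constructor
        · rintro (⟨_, h⟩ | ⟨h01, _⟩)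
          · exact h
          · exact absurd h01.symm one_ne_zero
        · intro h; exact Or.inl ⟨rfl, h⟩
      rw [heq]
      exact ⟨(h₀ _ _ hinit).1, fun hsp => (h₀ _ _ hinit).2 (hspec hsp)⟩
    · by_cases ha1 : al = 1
      · have heq : lineSet (stack A₀ A₁) a v = lineSet A₁ (Fin.init a) (Fin.init v) := by
          ext t
          simp only [lineSet, Set.mem_setOf_eq, hkey t, ha1]
          rw [mem_stack]
          constructor
          · rintro (⟨h01, _⟩ | ⟨_, h⟩)
            · exact absurd h01 one_ne_zero
            · exact h
          · intro h; exact Or.inr ⟨rfl, h⟩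
        rw [heq]
        exact ⟨(h₁ _ _ hinit).1, fun hsp => (h₁ _ _ hinit).2 (hspec hsp)⟩
      · have heq : lineSet (stack A₀ A₁) a v = ∅ := by
          ext t
          simp only [lineSet, Set.mem_setOf_eq, hkey t, Set.mem_empty_iff_false, iff_false]
          rw [mem_stack]
          rintro (⟨h, _⟩ | ⟨h, _⟩)
          · exact ha0 h
          · exact ha1 h
        rw [heq]
        simp
  · -- transversal line : at most 2 points
    have hsub : lineSet (stack A₀ A₁) a v ⊆
        {(0 - al) * vl⁻¹, (1 - al) * vl⁻¹} := by
      intro t ht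
      have hz : a + t • v = Fin.snoc (Fin.init (a + t • v)) (al + t * vl) := by
        have h1 : (a + t • v) (Fin.last m) = al + t * vl := by
          simp [← hal, ← hvl']
        rw [← h1, Fin.snoc_init_self]
      rw [lineSet, Set.mem_setOf_eq, hz, mem_stack] at ht
      rcases ht with ⟨h, _⟩ | ⟨h, _⟩
      · left
        field_simp
        linear_combination h
      · right
        rw [Set.mem_singleton_iff]
        field_simp
        linear_combination h
    have hle : (lineSet (stack A₀ A₁) a v).ncard ≤ 2 := by
      calc (lineSet (stack A₀ A₁) a v).ncard
          ≤ ({(0 - al) * vl⁻¹, (1 - al) * vl⁻¹} : Set F4).ncard :=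
            Set.ncard_le_ncard hsub (Set.toFinite _)
        _ ≤ 2 := by
            apply le_trans (Set.ncard_insert_le _ _)
            simp
    refine ⟨by omega, fun hsp => ?_⟩
    exfalso
    apply hvl
    rw [hvl']
    exact hsp (Fin.last m) (by simpa using Nat.one_le_iff_ne_zero.mp hm)

end S14

namespace S14

open Projectivization Module

variable {d : ℕ}

instance : Finite (PGPoint d) := Quotient.finite _

noncomputable section

/-- mk membership in pointsIn -/
lemma mk_mem_pointsIn {v : Fin (d+1) → F4} (hv : v ≠ 0) {U : Submodule F4 (Fin (d+1) → F4)} :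
    Projectivization.mk F4 v hv ∈ pointsIn U ↔ v ∈ U := by
  rw [pointsIn, Set.mem_setOf_eq, Projectivization.submodule_mk]
  constructor
  · intro h
    exact h (Submodule.mem_span_singleton_self v)
  · intro h
    rwa [Submodule.span_singleton_le_iff_mem]

lemma pointsIn_span_singleton {v : Fin (d+1) → F4} (hv : v ≠ 0) :
    pointsIn (Submodule.span F4 {v}) = {Projectivization.mk F4 v hv} := by
  ext p
  induction p using Projectivization.ind with
  | h w hw =>
    rw [mk_mem_pointsIn hw, Submodule.mem_span_singleton, Set.mem_singleton_iff]
    constructor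
    · rintro ⟨c, rfl⟩
      have hc : c ≠ 0 := by rintro rfl; simp at hw
      rw [mk_eq_mk_iff']
      exact ⟨c, rfl⟩
    · intro h
      rw [mk_eq_mk_iff'] at h
      obtain ⟨a, ha⟩ := h
      exact ⟨a, ha⟩

/-- the special affine "direction" vector -/
def sdir (d : ℕ) : AffPt d := fun j => if (j : ℕ) = 0 then 1 else 0

/-- the marked point vector in the hyperplane -/
def specv (d : ℕ) : Fin (d+1) → F4 := Fin.cons 0 (sdir d)

lemma specv_ne_zero (hd : 1 ≤ d) : specv d ≠ 0 := by
  intro h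
  have h1 : sdir d ⟨0, hd⟩ = 0 := by
    have := congrFun h (Fin.succ ⟨0, hd⟩)
    rwa [specv, Fin.cons_succ, Pi.zero_apply] at this
  simp [sdir] at h1

/-- chart vectors -/
def chartv (x : AffPt d) : Fin (d+1) → F4 := Fin.cons 1 x

lemma chartv_ne_zero (x : AffPt d) : chartv x ≠ 0 := by
  intro h
  have h1 := congrFun h 0
  simp [chartv] at h1

def PPt (hd : 1 ≤ d) : PGPoint d := Projectivization.mk F4 (specv d) (specv_ne_zero hd)

def ePt (x : AffPt d) : PGPoint d := Projectivization.mk F4 (chartv x) (chartv_ne_zero x)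

lemma ePt_injective : Function.Injective (ePt (d := d)) := by
  intro x y h
  rw [ePt, ePt, mk_eq_mk_iff'] at h
  obtain ⟨c, hc⟩ := h
  have h0 := congrFun hc 0
  simp [chartv] at h0
  funext j
  have hj := congrFun hc (Fin.succ j)
  simpa [chartv, h0] using hj.symm

lemma PPt_ne_ePt (hd : 1 ≤ d) (x : AffPt d) : PPt hd ≠ ePt x := by
  intro h
  rw [PPt, ePt, mk_eq_mk_iff'] at h
  obtain ⟨c, hc⟩ := h
  have h0 := congrFun hc 0
  simp [chartv, specv] at h0
  rw [h0] at hc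
  simp only [zero_smul] at hc
  exact specv_ne_zero hd hc.symm

/-- the truncation set -/
def Dset (hd : 1 ≤ d) (A : Set (AffPt d)) : Set (PGPoint d) := insert (PPt hd) (ePt '' A)

lemma Dset_ncard (hd : 1 ≤ d) (A : Set (AffPt d)) : (Dset hd A).ncard = A.ncard + 1 := by
  rw [Dset, Set.ncard_insert_of_notMem (by rintro ⟨x, _, hx⟩; exact PPt_ne_ePt hd x hx.symm)
    (Set.toFinite _), Set.ncard_image_of_injective _ ePt_injective]

/-- the hyperplane -/
def Hpl (d : ℕ) : Submodule F4 (Fin (d+1) → F4) := LinearMap.ker (LinearMap.proj 0)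

lemma mem_Hpl {x : Fin (d+1) → F4} : x ∈ Hpl d ↔ x 0 = 0 := by
  rw [Hpl, LinearMap.mem_ker, LinearMap.proj_apply]

lemma finrank_Hpl : Module.finrank F4 (Hpl d) = d := by
  have hsurj : Function.Surjective (LinearMap.proj (R := F4) (φ := fun _ : Fin (d+1) => F4) 0) := by
    intro c
    exact ⟨Fin.cons c 0, by simp [LinearMap.proj_apply]⟩
  have h1 := LinearMap.finrank_range_add_finrank_ker
    (LinearMap.proj (R := F4) (φ := fun _ : Fin (d+1) => F4) 0)
  rw [LinearMap.range_eq_top.mpr hsurj, finrank_top] at h1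
  have h2 : Module.finrank F4 (Fin (d+1) → F4) = d + 1 := by
    simp [Module.finrank_pi]
  have h3 : Module.finrank F4 F4 = 1 := Module.finrank_self F4
  rw [h2, h3] at h1
  rw [Hpl]
  omega

lemma specv_mem_Hpl : specv d ∈ Hpl d := by
  rw [mem_Hpl, specv]
  simp

lemma Dset_inter_Hpl (hd : 1 ≤ d) (A : Set (AffPt d)) :
    Dset hd A ∩ pointsIn (Hpl d) = {PPt hd} := by
  ext p
  constructor
  · rintro ⟨hp1, hp2⟩
    rcases hp1 with rfl | ⟨x, _, rfl⟩
    · rfl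
    · exfalso
      rw [ePt, mk_mem_pointsIn, mem_Hpl] at hp2
      simp [chartv] at hp2
  · rintro rfl
    refine ⟨Or.inl rfl, ?_⟩
    rw [PPt, mk_mem_pointsIn]
    exact specv_mem_Hpl

end

end S14

namespace S14

open Projectivization Module

variable {d : ℕ}

noncomputable section

lemma pair_span {W' : Submodule F4 (Fin (d+1) → F4)} (hW2 : Module.finrank F4 W' = 2)
    {x y : Fin (d+1) → F4} (hx : x ∈ W') (hy : y ∈ W')
    (hind : ∀ s t : F4, s • x + t • y = 0 → s = 0 ∧ t = 0) :
    ∀ z ∈ W', ∃ s t : F4, z = s • x + t • y := by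
  have hli : LinearIndependent F4 ![x, y] := LinearIndependent.pair_iff.mpr hind
  have hrange : Set.range ![x, y] = {x, y} := by
    rw [Matrix.range_cons, Matrix.range_cons_empty]
    rfl
  have hfr : Module.finrank F4 (Submodule.span F4 {x, y}) = 2 := by
    have := finrank_span_eq_card hli
    rwa [hrange, Fintype.card_fin] at this
  have hle : Submodule.span F4 ({x, y} : Set (Fin (d+1) → F4)) ≤ W' := by
    rw [Submodule.span_le]
    rintro z (rfl | rfl)
    · exact hx
    · exact hy
  have hsp : Submodule.span F4 ({x, y} : Set (Fin (d+1) → F4)) = W' :=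
    Submodule.eq_of_le_of_finrank_le hle (by rw [hfr, hW2])
  intro z hz
  rw [← hsp] at hz
  obtain ⟨s, t, hst⟩ := Submodule.mem_span_pair.mp hz
  exact ⟨s, t, hst.symm⟩

/-- from a 2-dimensional subspace, extract two vectors with the independence property -/
lemma exists_pair {W' : Submodule F4 (Fin (d+1) → F4)} (hW2 : Module.finrank F4 W' = 2) :
    ∃ x y : Fin (d+1) → F4, x ∈ W' ∧ y ∈ W' ∧
      (∀ s t : F4, s • x + t • y = 0 → s = 0 ∧ t = 0) := by
  have hbot : W' ≠ ⊥ := by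
    intro h
    rw [h] at hW2
    simp [finrank_bot] at hW2
  obtain ⟨x, hx, hx0⟩ := Submodule.ne_bot_iff W' |>.mp hbot
  have hnsub : ¬(W' ≤ Submodule.span F4 {x}) := by
    intro hle
    have := Submodule.finrank_mono hle
    rw [hW2, finrank_span_singleton hx0] at this
    omega
  obtain ⟨y, hy, hy0⟩ := SetLike.not_le_iff_exists.mp hnsub
  refine ⟨x, y, hx, hy, ?_⟩
  intro s t hst
  by_cases ht : t = 0
  · subst ht
    simp only [zero_smul, add_zero] at hst
    rcases smul_eq_zero.mp hst with h | h
    · exact ⟨h, rfl⟩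
    · exact absurd h hx0
  · exfalso
    apply hy0
    rw [Submodule.mem_span_singleton]
    refine ⟨-(t⁻¹ * s), ?_⟩
    have : y = -(t⁻¹ * s) • x := by
      field_simp
      have h1 : t • y = -(s • x) := by linear_combination hst
      have h2 : t⁻¹ • (t • y) = t⁻¹ • (-(s • x)) := by rw [h1]
      rw [smul_smul, inv_mul_cancel₀ ht, one_smul] at h2
      rw [h2]
      module
    rw [← this]

end

end S14

namespace S14

open Projectivization Module

variable {d : ℕ}

noncomputable section

lemma three_distinct_ncard_ne_two {α : Type*} {S : Set α} {p q r : α}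
    (hp : p ∈ S) (hq : q ∈ S) (hr : r ∈ S) (h1 : p ≠ q) (h2 : p ≠ r) (h3 : q ≠ r) :
    S.ncard ≠ 2 := by
  intro hn
  obtain ⟨a, b, hab, rfl⟩ := Set.ncard_eq_two.mp hn
  simp only [Set.mem_insert_iff, Set.mem_singleton_iff] at hp hq hr
  rcases hp with rfl | rfl <;> rcases hq with rfl | rfl <;> rcases hr with rfl | rfl <;> simp_all

lemma exists_mu : ∃ μ : F4, μ ≠ 0 ∧ μ ≠ 1 := by
  by_contra hcon
  push_neg at hcon
  have hsub : (Set.univ : Set F4) ⊆ {0, 1} := by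
    intro μ _
    rcases eq_or_ne μ 0 with rfl | h
    · exact Or.inl rfl
    · exact Or.inr (hcon μ h)
  have h1 : (Set.univ : Set F4).ncard ≤ ({0, 1} : Set F4).ncard :=
    Set.ncard_le_ncard hsub (Set.toFinite _)
  have h2 : ({0, 1} : Set F4).ncard ≤ 2 := by
    apply le_trans (Set.ncard_insert_le _ _)
    simp
  rw [ncard_univ_F4] at h1
  omega

/-- case B : the line lies inside the hyperplane -/
lemma legal_subH (hd : 1 ≤ d) (A : Set (AffPt d)) {W' : Submodule F4 (Fin (d+1) → F4)}
    (hW2 : Module.finrank F4 W' = 2) (hsub : W' ≤ Hpl d) :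
    (pointsIn W' \ Dset hd A).ncard ≠ 2 := by
  obtain ⟨x, y, hx, hy, hind⟩ := exists_pair hW2
  obtain ⟨μ, hμ0, hμ1⟩ := exists_mu
  -- nonzero combinations
  have hnz : ∀ s t : F4, ¬(s = 0 ∧ t = 0) → s • x + t • y ≠ 0 := by
    intro s t hst h0
    exact hst (hind s t h0)
  have hx0 : x ≠ 0 := by
    have := hnz 1 0 (by simp)
    simpa using this
  have hy0 : y ≠ 0 := by
    have := hnz 0 1 (by simp)
    simpa using this
  have hxy0 : x + y ≠ 0 := by
    have := hnz 1 1 (by simp)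
    simpa using this
  have hxmy0 : x + μ • y ≠ 0 := by
    have := hnz 1 μ (by simp)
    simpa using this
  -- the four points
  set q0 := Projectivization.mk F4 x hx0 with hq0
  set q1 := Projectivization.mk F4 y hy0 with hq1
  set q2 := Projectivization.mk F4 (x + y) hxy0 with hq2
  set q3 := Projectivization.mk F4 (x + μ • y) hxmy0 with hq3
  -- distinctness via determinants
  have hne : ∀ (s t s' t' : F4) (hz : s • x + t • y ≠ 0) (hz' : s' • x + t' • y ≠ 0),
      s * t' ≠ t * s' →
      Projectivization.mk F4 (s • x + t • y) hz ≠ Projectivization.mk F4 (s' • x + t' • y) hz' := by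
    intro s t s' t' hz hz' hdet heq
    rw [mk_eq_mk_iff'] at heq
    obtain ⟨c, hc⟩ := heq
    have hcomb : (c * s' - s) • x + (c * t' - t) • y = 0 := by
      have : c • (s' • x + t' • y) - (s • x + t • y) = 0 := by rw [hc]; abel
      calc (c * s' - s) • x + (c * t' - t) • y
          = c • (s' • x + t' • y) - (s • x + t • y) := by module
        _ = 0 := this
    obtain ⟨h1, h2⟩ := hind _ _ hcomb
    have hs : c * s' = s := by linear_combination h1
    have ht : c * t' = t := by linear_combination h2
    apply hdet
    calc s * t' = (c * s') * t' := by rw [hs]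
      _ = (c * t') * s' := by ring
      _ = t * s' := by rw [ht]
  have e0 : q0 = Projectivization.mk F4 ((1:F4) • x + (0:F4) • y) (by simpa using hx0) := by
    rw [hq0]; congr 1; module
  have e1 : q1 = Projectivization.mk F4 ((0:F4) • x + (1:F4) • y) (by simpa using hy0) := by
    rw [hq1]; congr 1; module
  have e2 : q2 = Projectivization.mk F4 ((1:F4) • x + (1:F4) • y) (by simpa using hxy0) := by
    rw [hq2]; congr 1; module
  have e3 : q3 = Projectivization.mk F4 ((1:F4) • x + μ • y) (by simpa using hxmy0) := by
    rw [hq3]; congr 1; module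
  have h01 : q0 ≠ q1 := by rw [e0, e1]; exact hne _ _ _ _ _ _ (by norm_num)
  have h02 : q0 ≠ q2 := by rw [e0, e2]; exact hne _ _ _ _ _ _ (by norm_num)
  have h03 : q0 ≠ q3 := by rw [e0, e3]; exact hne _ _ _ _ _ _ (by simpa using hμ0)
  have h12 : q1 ≠ q2 := by rw [e1, e2]; exact hne _ _ _ _ _ _ (by norm_num)
  have h13 : q1 ≠ q3 := by rw [e1, e3]; exact hne _ _ _ _ _ _ (by simp)
  have h23 : q2 ≠ q3 := by
    rw [e2, e3]
    refine hne _ _ _ _ _ _ ?_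
    simpa [eq_comm] using hμ1
  -- membership
  have hm0 : q0 ∈ pointsIn W' := (mk_mem_pointsIn hx0).mpr hx
  have hm1 : q1 ∈ pointsIn W' := (mk_mem_pointsIn hy0).mpr hy
  have hm2 : q2 ∈ pointsIn W' := (mk_mem_pointsIn hxy0).mpr (Submodule.add_mem _ hx hy)
  have hm3 : q3 ∈ pointsIn W' :=
    (mk_mem_pointsIn hxmy0).mpr (Submodule.add_mem _ hx (Submodule.smul_mem _ _ hy))
  -- in D → equals PPt
  have hD : ∀ p : PGPoint d, p ∈ pointsIn W' → p ∈ Dset hd A → p = PPt hd := by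
    intro p hpW hpD
    have hpH : p ∈ pointsIn (Hpl d) := le_trans hpW hsub
    have : p ∈ Dset hd A ∩ pointsIn (Hpl d) := ⟨hpD, hpH⟩
    rw [Dset_inter_Hpl] at this
    exact this
  -- select three points not in D
  have hsel : ∃ p q r : PGPoint d, p ∈ pointsIn W' \ Dset hd A ∧ q ∈ pointsIn W' \ Dset hd A ∧
      r ∈ pointsIn W' \ Dset hd A ∧ p ≠ q ∧ p ≠ r ∧ q ≠ r := by
    by_cases hb0 : q0 ∈ Dset hd A
    · have hp0 : q0 = PPt hd := hD q0 hm0 hb0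
      refine ⟨q1, q2, q3, ⟨hm1, ?_⟩, ⟨hm2, ?_⟩, ⟨hm3, ?_⟩, h12, h13, h23⟩
      · intro hc; exact h01 (hp0.trans (hD q1 hm1 hc).symm)
      · intro hc; exact h02 (hp0.trans (hD q2 hm2 hc).symm)
      · intro hc; exact h03 (hp0.trans (hD q3 hm3 hc).symm)
    · by_cases hb1 : q1 ∈ Dset hd A
      · have hp1 : q1 = PPt hd := hD q1 hm1 hb1
        refine ⟨q0, q2, q3, ⟨hm0, hb0⟩, ⟨hm2, ?_⟩, ⟨hm3, ?_⟩, h02, h03, h23⟩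
        · intro hc; exact h12 (hp1.trans (hD q2 hm2 hc).symm)
        · intro hc; exact h13 (hp1.trans (hD q3 hm3 hc).symm)
      · by_cases hb2 : q2 ∈ Dset hd A
        · have hp2 : q2 = PPt hd := hD q2 hm2 hb2
          refine ⟨q0, q1, q3, ⟨hm0, hb0⟩, ⟨hm1, hb1⟩, ⟨hm3, ?_⟩, h01, h03, h13⟩
          intro hc; exact h23 (hp2.trans (hD q3 hm3 hc).symm)
        · exact ⟨q0, q1, q2, ⟨hm0, hb0⟩, ⟨hm1, hb1⟩, ⟨hm2, hb2⟩, h01, h02, h12⟩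
  obtain ⟨p, q, r, hp, hq, hr, h1, h2, h3⟩ := hsel
  exact three_distinct_ncard_ne_two hp hq hr h1 h2 h3

end

end S14

namespace S14

open Projectivization Module

variable {d : ℕ}

noncomputable section

/-- case A : the line is not inside the hyperplane -/
lemma legal_affine (hd : 1 ≤ d) {A : Set (AffPt d)} (hA : Inv A)
    {W' : Submodule F4 (Fin (d+1) → F4)} (hW2 : Module.finrank F4 W' = 2)
    {w : Fin (d+1) → F4} (hw : w ∈ W') (hw0 : w 0 ≠ 0) :
    (pointsIn W' \ Dset hd A).ncard ≠ 2 := by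
  classical
  obtain ⟨u, huW, hu0⟩ : ∃ u ∈ W', u 0 = 1 :=
    ⟨(w 0)⁻¹ • w, Submodule.smul_mem _ _ hw, by
      rw [Pi.smul_apply, smul_eq_mul]; exact inv_mul_cancel₀ hw0⟩
  obtain ⟨x, y, hx, hy, hind⟩ := exists_pair hW2
  obtain ⟨h, hhW, hh0, hhne⟩ : ∃ h, h ∈ W' ∧ h 0 = 0 ∧ h ≠ 0 := by
    by_cases hc0 : x - (x 0) • u = 0
    · refine ⟨y - (y 0) • u, Submodule.sub_mem _ hy (Submodule.smul_mem _ _ huW),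
        by simp [Pi.sub_apply, Pi.smul_apply, smul_eq_mul, hu0], ?_⟩
      intro hc1
      obtain ⟨a, hxu⟩ : ∃ a : F4, x = a • u := ⟨x 0, by rwa [sub_eq_zero] at hc0⟩
      obtain ⟨b, hyu⟩ : ∃ b : F4, y = b • u := ⟨y 0, by rwa [sub_eq_zero] at hc1⟩
      have hcomb : b • x + (-a) • y = 0 := by
        rw [hxu, hyu]; module
      obtain ⟨h1, h2⟩ := hind _ _ hcomb
      have ha0 : a = 0 := by linear_combination -h2
      have hx0 : x = 0 := by rw [hxu, ha0, zero_smul]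
      obtain ⟨h3, _⟩ := hind 1 0 (by rw [hx0]; module)
      exact one_ne_zero h3
    · exact ⟨x - (x 0) • u, Submodule.sub_mem _ hx (Submodule.smul_mem _ _ huW),
        by simp [Pi.sub_apply, Pi.smul_apply, smul_eq_mul, hu0], hc0⟩
  have hindu : ∀ s t : F4, s • u + t • h = 0 → s = 0 ∧ t = 0 := by
    intro s t hst
    have h0' := congrFun hst 0
    simp only [Pi.add_apply, Pi.smul_apply, smul_eq_mul, hu0, hh0, mul_one, mul_zero, add_zero,
      Pi.zero_apply] at h0'
    subst h0'
    simp only [zero_smul, zero_add] at hst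
    rcases smul_eq_zero.mp hst with h' | h'
    · exact ⟨rfl, h'⟩
    · exact absurd h' hhne
  have hrep := pair_span hW2 huW hhW hindu
  have hcoord : ∀ t : F4, (u + t • h) 0 = 1 := by
    intro t
    simp [Pi.add_apply, Pi.smul_apply, smul_eq_mul, hu0, hh0]
  have hfnz : ∀ t : F4, u + t • h ≠ 0 := by
    intro t hz
    have h0' := congrFun hz 0
    rw [hcoord t, Pi.zero_apply] at h0'
    exact one_ne_zero h0'
  set Q : PGPoint d := Projectivization.mk F4 h hhne with hQdef
  set f : F4 → PGPoint d := fun t => Projectivization.mk F4 (u + t • h) (hfnz t) with hfdef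
  have hpoints : pointsIn W' = insert Q (Set.range f) := by
    ext p
    induction p using Projectivization.ind with
    | h z hz =>
      rw [mk_mem_pointsIn hz, Set.mem_insert_iff, Set.mem_range]
      constructor
      · intro hzW
        obtain ⟨s, t, hst⟩ := hrep z hzW
        by_cases hs : s = 0
        · left
          subst hs
          rw [zero_smul, zero_add] at hst
          have ht : t ≠ 0 := by rintro rfl; rw [zero_smul] at hst; exact hz hst
          rw [hQdef, mk_eq_mk_iff']
          exact ⟨t, hst.symm⟩
        · right
          refine ⟨s⁻¹ * t, ?_⟩
          rw [hfdef, mk_eq_mk_iff']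
          refine ⟨s⁻¹, ?_⟩
          rw [hst, smul_add, smul_smul, inv_mul_cancel₀ hs, one_smul, smul_smul]
      · intro hmem
        rcases hmem with hq | ⟨t, ht⟩
        · rw [hQdef, mk_eq_mk_iff'] at hq
          obtain ⟨a, ha⟩ := hq
          rw [← ha]
          exact Submodule.smul_mem _ _ hhW
        · rw [hfdef, mk_eq_mk_iff'] at ht
          obtain ⟨a, ha⟩ := ht
          have ha0 : a ≠ 0 := by
            rintro rfl
            rw [zero_smul] at ha
            exact hfnz t ha.symm
          rw [← Submodule.smul_mem_iff _ ha0, ha]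
          exact Submodule.add_mem _ huW (Submodule.smul_mem _ _ hhW)
  have hQrange : Q ∉ Set.range f := by
    rintro ⟨t, ht⟩
    rw [hfdef, hQdef, mk_eq_mk_iff'] at ht
    obtain ⟨a, ha⟩ := ht
    have h0' := congrFun ha 0
    rw [Pi.smul_apply, smul_eq_mul, hcoord t] at h0'
    rw [hh0, mul_zero] at h0'
    exact one_ne_zero h0'.symm
  have hfinj : Function.Injective f := by
    intro t t' htt
    rw [hfdef, mk_eq_mk_iff'] at htt
    obtain ⟨a, ha⟩ := htt
    have h0' := congrFun ha 0
    rw [Pi.smul_apply, smul_eq_mul, hcoord t', hcoord t, mul_one] at h0'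
    subst h0'
    rw [one_smul] at ha
    have : (t' - t) • h = 0 := by
      rw [sub_smul]
      have := add_left_cancel ha
      rw [this, sub_self]
    rcases smul_eq_zero.mp this with h' | h'
    · have : t' = t := by linear_combination h'
      exact this.symm
    · exact absurd h' hhne
  have htails : ∀ t : F4, Fin.tail (u + t • h) = Fin.tail u + t • Fin.tail h := by
    intro t
    funext j
    simp [Fin.tail, Pi.add_apply, Pi.smul_apply]
  have hftD : ∀ t : F4, f t ∈ Dset hd A ↔ (Fin.tail u + t • Fin.tail h) ∈ A := by
    intro t
    rw [Dset, Set.mem_insert_iff]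
    constructor
    · rintro (hP | ⟨xx, hxx, hxe⟩)
      · exfalso
        rw [hfdef, PPt, mk_eq_mk_iff'] at hP
        obtain ⟨a, ha⟩ := hP
        have h0' := congrFun ha 0
        rw [Pi.smul_apply, smul_eq_mul, hcoord t] at h0'
        have : specv d 0 = 0 := by rw [specv, Fin.cons_zero]
        rw [this, mul_zero] at h0'
        exact one_ne_zero h0'.symm
      · rw [ePt, hfdef, mk_eq_mk_iff'] at hxe
        obtain ⟨a, ha⟩ := hxe
        have h0' := congrFun ha 0
        rw [Pi.smul_apply, smul_eq_mul, hcoord t, mul_one] at h0'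
        have hc0 : chartv xx 0 = 1 := by rw [chartv, Fin.cons_zero]
        rw [hc0] at h0'
        subst h0'
        rw [one_smul] at ha
        have : xx = Fin.tail u + t • Fin.tail h := by
          rw [← htails t]
          funext j
          have := congrFun ha (Fin.succ j)
          rw [chartv, Fin.cons_succ] at this
          rw [Fin.tail]
          exact this.symm
        rwa [← this]
    · intro hmem
      right
      refine ⟨_, hmem, ?_⟩
      rw [ePt, hfdef, mk_eq_mk_iff']
      refine ⟨1, ?_⟩
      rw [one_smul]
      funext i
      refine Fin.cases ?_ (fun j => ?_) i
      · rw [chartv, Fin.cons_zero]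
        exact hcoord t
      · rw [chartv, Fin.cons_succ, ← htails t, Fin.tail]
  have hQD : Q ∈ Dset hd A ↔ (∀ j : Fin d, (j : ℕ) ≠ 0 → Fin.tail h j = 0) := by
    rw [Dset, Set.mem_insert_iff]
    constructor
    · rintro (hP | ⟨xx, hxx, hxe⟩)
      · rw [hQdef, PPt, mk_eq_mk_iff'] at hP
        obtain ⟨a, ha⟩ := hP
        intro j hj
        have := congrFun ha (Fin.succ j)
        rw [Pi.smul_apply, smul_eq_mul, specv, Fin.cons_succ] at this
        rw [Fin.tail, ← this, sdir]
        simp [hj]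
      · exfalso
        rw [ePt, hQdef, mk_eq_mk_iff'] at hxe
        obtain ⟨a, ha⟩ := hxe
        have h0' := congrFun ha 0
        rw [Pi.smul_apply, smul_eq_mul, hh0, mul_zero] at h0'
        have hc0 : chartv xx 0 = 1 := by rw [chartv, Fin.cons_zero]
        rw [hc0] at h0'
        exact one_ne_zero h0'.symm
    · intro hsp
      left
      rw [hQdef, PPt, mk_eq_mk_iff']
      refine ⟨Fin.tail h ⟨0, hd⟩, ?_⟩
      funext i
      refine Fin.cases ?_ (fun j => ?_) i
      · rw [Pi.smul_apply, smul_eq_mul, specv, Fin.cons_zero, mul_zero, hh0]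
      · rw [Pi.smul_apply, smul_eq_mul, specv, Fin.cons_succ, sdir]
        by_cases hj : (j : ℕ) = 0
        · have hj' : j = ⟨0, hd⟩ := Fin.ext hj
        
          rw [if_pos hj, mul_one, hj', Fin.tail]
        · rw [if_neg hj, mul_zero]
          have := hsp j hj
          rw [Fin.tail] at this
          exact this.symm
  have htail : Fin.tail h ≠ 0 := by
    intro h0
    apply hhne
    funext i
    refine Fin.cases ?_ (fun j => ?_) i
    · rw [hh0, Pi.zero_apply]
    · have := congrFun h0 j
      rw [Fin.tail, Pi.zero_apply] at this
      rw [this, Pi.zero_apply]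
  obtain ⟨hS3, hS2⟩ := hA (Fin.tail u) (Fin.tail h) htail
  set S := lineSet A (Fin.tail u) (Fin.tail h) with hSdef
  have h4 : Nat.card F4 = 4 := by
    have := GaloisField.card 2 2 (by norm_num)
    norm_num at this
    exact this
  have hScompl : S.ncard + Sᶜ.ncard = 4 := by
    rw [Set.ncard_add_ncard_compl S (Set.toFinite _) (Set.toFinite _)]
    exact h4
  have hfT : ∀ t : F4, f t ∉ Dset hd A ↔ t ∈ Sᶜ := by
    intro t
    rw [Set.mem_compl_iff, hSdef, lineSet, Set.mem_setOf_eq]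
    exact not_congr (hftD t)
  by_cases hq : Q ∈ Dset hd A
  · have hdiff : pointsIn W' \ Dset hd A = f '' Sᶜ := by
      rw [hpoints]
      ext p
      constructor
      · rintro ⟨hp1, hp2⟩
        rw [Set.mem_insert_iff, Set.mem_range] at hp1
        rcases hp1 with rfl | ⟨t, rfl⟩
        · exact absurd hq hp2
        · exact ⟨t, (hfT t).mp hp2, rfl⟩
      · rintro ⟨t, ht, rfl⟩
        exact ⟨Set.mem_insert_of_mem _ ⟨t, rfl⟩, (hfT t).mpr ht⟩
    rw [hdiff, Set.ncard_image_of_injective _ hfinj]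
    have h2' := hS2 ((hQD).mp hq)
    omega
  · have hdiff : pointsIn W' \ Dset hd A = insert Q (f '' Sᶜ) := by
      rw [hpoints]
      ext p
      constructor
      · rintro ⟨hp1, hp2⟩
        rw [Set.mem_insert_iff, Set.mem_range] at hp1
        rcases hp1 with rfl | ⟨t, rfl⟩
        · exact Set.mem_insert _ _
        · exact Set.mem_insert_of_mem _ ⟨t, (hfT t).mp hp2, rfl⟩
      · intro hp
        rw [Set.mem_insert_iff] at hp
        rcases hp with rfl | ⟨t, ht, rfl⟩
        · exact ⟨Set.mem_insert _ _, hq⟩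
        · exact ⟨Set.mem_insert_of_mem _ ⟨t, rfl⟩, (hfT t).mpr ht⟩
    rw [hdiff, Set.ncard_insert_of_notMem
      (fun hin => hQrange (Set.image_subset_range f _ hin)) (Set.toFinite _),
      Set.ncard_image_of_injective _ hfinj]
    omega

lemma legal_Dset (hd : 1 ≤ d) {A : Set (AffPt d)} (hA : Inv A) : LegalTrunc (Dset hd A) := by
  rintro L ⟨W', hW2, rfl⟩
  by_cases hcase : ∃ w ∈ W', w 0 ≠ 0
  · obtain ⟨w, hw, hw0⟩ := hcase
    exact legal_affine hd hA hW2 hw hw0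
  · push_neg at hcase
    have hsub : W' ≤ Hpl d := by
      intro z hz
      rw [mem_Hpl]
      exact hcase z hz
    exact legal_subH hd A hW2 hsub

end

end S14

namespace S14

lemma reach_ge_one {m n : ℕ} (h : Reach m n) : 1 ≤ m := by
  induction h with
  | z => exact le_rfl
  | o => exact le_rfl
  | full m hm => exact hm
  | add _ _ _ _ => omega

lemma realize {m n : ℕ} (h : Reach m n) : ∃ A : Set (AffPt m), Inv A ∧ A.ncard = n := by
  induction h with
  | z => exact ⟨∅, inv_empty, by simp⟩
  | o => exact ⟨{fun _ => 0}, inv_singleton _, Set.ncard_singleton _⟩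
  | full m hm => exact ⟨Set.univ, inv_univ, ncard_univ_AffPt m⟩
  | add ha hb iha ihb =>
    obtain ⟨A₀, h₀, hc₀⟩ := iha
    obtain ⟨A₁, h₁, hc₁⟩ := ihb
    exact ⟨stack A₀ A₁, stack_inv (reach_ge_one ha) h₀ h₁, by rw [stack_ncard, hc₀, hc₁]⟩

lemma bracket4_eq (e : ℕ) : 3 * bracket4 e + 1 = 4 ^ (e+1) := by
  induction e with
  | zero => simp [bracket4]
  | succ k ih =>
    rw [bracket4, Finset.sum_range_succ]
    rw [bracket4] at ih
    have : (4:ℕ) ^ (k+2) = 4 * 4 ^ (k+1) := by ring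
    omega

lemma pow4_mod6 : ∀ d : ℕ, 1 ≤ d → 4 ^ d % 6 = 4
  | 1, _ => by norm_num
  | (k+2), _ => by
    have ih := pow4_mod6 (k+1) (by omega)
    have h : (4:ℕ) ^ (k+2) = 4 ^ (k+1) * 4 := by ring
    omega

end S14


/-- Low values: for every `d ≥ 1`, every integer `n` with `0 ≤ n ≤ [d-1]₄ / 2` belongs to
`S(d,0)`; i.e. `PG_d(4)` admits a legal truncation removing `n + 1` points leaving a
hyperplane with precisely one point removed. -/
theorem statement14 (d : ℕ) (hd : 1 ≤ d) (n : ℕ) (hn : 2 * n ≤ bracket4 (d - 1)) :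
    n ∈ SS d 0 := by
  have hb := S14.bracket4_eq (d - 1)
  rw [show d - 1 + 1 = d by omega] at hb
  have hmod := S14.pow4_mod6 d hd
  have h6 : 6 * n + 4 ≤ 4 ^ d := by omega
  have hreach : S14.Reach d n := S14.reach_of_hc d hd n (S14.cover d hd n h6)
  obtain ⟨A, hA, hAcard⟩ := S14.realize hreach
  rw [SS, Set.mem_setOf_eq, TT, Set.mem_setOf_eq]
  refine ⟨S14.Dset hd A, S14.legal_Dset hd hA, ?_, S14.Hpl d,
    Submodule.span F4 {S14.specv d}, S14.finrank_Hpl, ?_, ?_, ?_⟩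
  · rw [S14.Dset_ncard, hAcard, bracket4]
    simp
  · rw [finrank_span_singleton (S14.specv_ne_zero hd)]
  · rw [Submodule.span_le, Set.singleton_subset_iff]
    exact S14.specv_mem_Hpl
  · rw [S14.Dset_inter_Hpl, S14.pointsIn_span_singleton (S14.specv_ne_zero hd)]
    rfl
end

section
/- Let (X,𝓑) be a pairwise balanced design on X = {1,...,n} with all block sizes at least 3, and for each block B let L^B be an idempotent latin square on the symbol set B. Define the n×n array L by L_{ii} = i and, for i ≠ j, L_{ij} = L^B_{ij} where B is the unique block containing {i,j}. Then L is an idempotent latin square of order n; moreover, every flat Y of (X,𝓑) yields a subsquare of L with row set Y, column set Y, and symbol set Y. -/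
/-- `IsPBD V K Blocks` : the blocks form a pairwise balanced design on point set `V`
with block sizes in `K`: every block is a subset of `V` of size in `K`, and every
pair of distinct points of `V` lies in exactly one block. -/
def IsPBD {X : Type*} (V : Finset X) (K : Set ℕ) (Blocks : Finset (Finset X)) : Prop :=
  (∀ B ∈ Blocks, B ⊆ V ∧ B.card ∈ K) ∧
    ∀ x ∈ V, ∀ y ∈ V, x ≠ y → ∃! B, B ∈ Blocks ∧ x ∈ B ∧ y ∈ B

/-- `IsFlat V Blocks Y` : `Y` is a flat of the design `(V, Blocks)`: `Y ⊆ V` and every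
pair of distinct points of `Y` lies in a block entirely contained in `Y`. -/
def IsFlat {X : Type*} (V : Finset X) (Blocks : Finset (Finset X)) (Y : Finset X) : Prop :=
  Y ⊆ V ∧ ∀ x ∈ Y, ∀ y ∈ Y, x ≠ y → ∃ B ∈ Blocks, x ∈ B ∧ y ∈ B ∧ B ⊆ Y

/-- `IsLatinOn B f` : `f` restricts to a latin square with rows, columns and symbols
indexed by the finite set `B`. -/
def IsLatinOn {X : Type*} (B : Finset X) (f : X → X → X) : Prop :=
  (∀ i ∈ B, Set.BijOn (f i) ↑B ↑B) ∧ ∀ j ∈ B, Set.BijOn (fun i => f i j) ↑B ↑B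

/-- `IsSubsquare L R C S` : the rows `R`, columns `C` and symbols `S` form a latin
subsquare of the array `L` : the three sets have equal size, and each row of `R`,
restricted to the columns `C`, hits each symbol of `S` exactly once. -/
def IsSubsquare {X : Type*} (L : X → X → X) (R C S : Finset X) : Prop :=
  R.card = C.card ∧ C.card = S.card ∧ ∀ i ∈ R, Set.BijOn (L i) ↑C ↑S

/-- Gluing idempotent latin squares along the blocks of a pairwise balanced design with
all block sizes at least `3` yields an idempotent latin square of order `n`; moreover,
every flat `Y` of the design yields a latin subsquare with rows, columns and symbols `Y`. -/
theorem statement17 (n : ℕ) (Blocks : Finset (Finset (Fin n)))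
    (hPBD : IsPBD Finset.univ {m : ℕ | 3 ≤ m} Blocks)
    (Lsq : Finset (Fin n) → Fin n → Fin n → Fin n)
    (hLsq : ∀ B ∈ Blocks, IsLatinOn B (Lsq B) ∧ ∀ i ∈ B, Lsq B i i = i)
    (L : Fin n → Fin n → Fin n)
    (hdiag : ∀ i : Fin n, L i i = i)
    (hoff : ∀ i j : Fin n, i ≠ j → ∀ B ∈ Blocks, i ∈ B → j ∈ B → L i j = Lsq B i j) :
    ((∀ i : Fin n, Function.Bijective (L i)) ∧
      (∀ j : Fin n, Function.Bijective fun i => L i j) ∧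
      ∀ i : Fin n, L i i = i) ∧
    ∀ Y : Finset (Fin n), IsFlat Finset.univ Blocks Y → IsSubsquare L Y Y Y := by
  obtain ⟨hBlk, huniq⟩ := hPBD
  -- a helper: for distinct points, the block containing them and basic facts
  have key : ∀ i j : Fin n, j ≠ i →
      ∃ B ∈ Blocks, i ∈ B ∧ j ∈ B ∧ L i j = Lsq B i j ∧ L i j ≠ i ∧ L i j ∈ B := by
    intro i j hj
    obtain ⟨B, ⟨hB, hiB, hjB⟩, _⟩ :=
      huniq i (Finset.mem_univ i) j (Finset.mem_univ j) (Ne.symm hj)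
    have hLij : L i j = Lsq B i j := hoff i j (Ne.symm hj) B hB hiB hjB
    refine ⟨B, hB, hiB, hjB, hLij, ?_, ?_⟩
    · intro hcon
      have hinj := ((hLsq B hB).1.1 i hiB).2.1
      have : j = i := hinj hjB hiB (by
        rw [← hLij, hcon, (hLsq B hB).2 i hiB])
      exact hj this
    · rw [hLij]; exact ((hLsq B hB).1.1 i hiB).1 hjB
  have keyc : ∀ i j : Fin n, j ≠ i →
      ∃ B ∈ Blocks, i ∈ B ∧ j ∈ B ∧ L j i = Lsq B j i ∧ L j i ≠ i ∧ L j i ∈ B := by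
    intro i j hj
    obtain ⟨B, ⟨hB, hiB, hjB⟩, _⟩ :=
      huniq i (Finset.mem_univ i) j (Finset.mem_univ j) (Ne.symm hj)
    have hLji : L j i = Lsq B j i := hoff j i hj B hB hjB hiB
    refine ⟨B, hB, hiB, hjB, hLji, ?_, ?_⟩
    · intro hcon
      have hinj := ((hLsq B hB).1.2 i hiB).2.1
      have : j = i := hinj hjB hiB (by
        simp only []
        rw [← hLji, hcon, (hLsq B hB).2 i hiB])
      exact hj this
    · rw [hLji]; exact ((hLsq B hB).1.2 i hiB).1 hjB
  have hrowinj : ∀ i : Fin n, Function.Injective (L i) := by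
    intro i j k h
    by_contra hjk
    rcases eq_or_ne j i with rfl | hji
    · have hki : k ≠ j := fun hc => hjk hc.symm
      obtain ⟨B, hB, hiB, hkB, hLik, hne, _⟩ := key j k hki
      exact hne (by rw [← h, hdiag])
    · rcases eq_or_ne k i with rfl | hki
      · obtain ⟨B, hB, hiB, hjB, hLij, hne, _⟩ := key k j hji
        exact hne (by rw [h, hdiag])
      · obtain ⟨B, hB, hiB, hjB, hLij, hneJ, hmemJ⟩ := key i j hji
        obtain ⟨B', hB', hiB', hkB', hLik, hneK, hmemK⟩ := key i k hki
        have hBB' : B = B' := by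
          obtain ⟨Bu, _, hBuU⟩ :=
            huniq i (Finset.mem_univ i) (L i j) (Finset.mem_univ _) (Ne.symm hneJ)
          have h1 := hBuU B ⟨hB, hiB, hmemJ⟩
          have h2 := hBuU B' ⟨hB', hiB', by rw [h]; exact hmemK⟩
          rw [h1, h2]
        subst hBB'
        have hinj := ((hLsq B hB).1.1 i hiB).2.1
        exact hjk (hinj hjB hkB' (by rw [← hLij, ← hLik, h]))
  have hcolinj : ∀ i : Fin n, Function.Injective (fun j => L j i) := by
    intro i j k h
    simp only [] at h
    by_contra hjk
    rcases eq_or_ne j i with rfl | hji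
    · have hki : k ≠ j := fun hc => hjk hc.symm
      obtain ⟨B, hB, hiB, hkB, hLik, hne, _⟩ := keyc j k hki
      exact hne (by rw [← h, hdiag])
    · rcases eq_or_ne k i with rfl | hki
      · obtain ⟨B, hB, hiB, hjB, hLij, hne, _⟩ := keyc k j hji
        exact hne (by rw [h, hdiag])
      · obtain ⟨B, hB, hiB, hjB, hLij, hneJ, hmemJ⟩ := keyc i j hji
        obtain ⟨B', hB', hiB', hkB', hLik, hneK, hmemK⟩ := keyc i k hki
        have hBB' : B = B' := by
          obtain ⟨Bu, _, hBuU⟩ :=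
            huniq i (Finset.mem_univ i) (L j i) (Finset.mem_univ _) (Ne.symm hneJ)
          have h1 := hBuU B ⟨hB, hiB, hmemJ⟩
          have h2 := hBuU B' ⟨hB', hiB', by rw [h]; exact hmemK⟩
          rw [h1, h2]
        subst hBB'
        have hinj := ((hLsq B hB).1.2 i hiB).2.1
        exact hjk (hinj hjB hkB' (by simp only []; rw [← hLij, ← hLik, h]))
  refine ⟨⟨fun i => Finite.injective_iff_bijective.mp (hrowinj i),
      fun j => Finite.injective_iff_bijective.mp (hcolinj j), hdiag⟩, ?_⟩
  intro Y ⟨_, hflat⟩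
  refine ⟨rfl, rfl, fun i hi => ?_⟩
  have hmaps : Set.MapsTo (L i) ↑Y ↑Y := by
    intro j hj
    simp only [Finset.coe_mem, Finset.mem_coe] at *
    rcases eq_or_ne j i with rfl | hji
    · rw [hdiag]; exact hj
    · obtain ⟨B, hB, hiB, hjB, hBY⟩ := hflat i hi j hj (Ne.symm hji)
      rw [hoff i j (Ne.symm hji) B hB hiB hjB]
      exact hBY (((hLsq B hB).1.1 i hiB).1 hjB)
  exact (Set.Finite.injOn_iff_bijOn_of_mapsTo Y.finite_toSet hmaps).mp
    ((hrowinj i).injOn)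
end
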